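/- arXiv:1702.06301 — 7 statements merged into one kernel-verified Lean document; each statement's English description precedes it below -/
import Mathlib

section
/- Let $\sigma$ be a finite non-atomic Borel measure on $\mathbb{R}^d$ ($d \geq 1$). Then there exists a direction $y \in \mathbb{R}^d \setminus \{0\}$ such that $\sigma(H) = 0$ for every affine hyperplane $H$ orthogonal to $y$. -/
open MeasureTheory Set

variable {d : ℕ}

lemma core_lemma (hd : 1 ≤ d) (ν : Measure (EuclideanSpace ℝ (Fin d)))
    [IsFiniteMeasure ν] (h0 : ν {0} = 0) :
    ∃ y : EuclideanSpace ℝ (Fin d), y ≠ 0 ∧ ν {z | inner ℝ z y = (0:ℝ)} = 0 := by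
  classical
  set E := EuclideanSpace ℝ (Fin d)
  set Min : Submodule ℝ E → Prop := fun W => ν W ≠ 0 ∧ ∀ W' < W, ν (W' : Set E) = 0 with hMin
  have claimA : ∀ W : Submodule ℝ E, ν W ≠ 0 → ∃ W' ≤ W, Min W' := by
    have key : ∀ n : ℕ, ∀ W : Submodule ℝ E, Module.finrank ℝ W ≤ n → ν W ≠ 0 →
        ∃ W' ≤ W, Min W' := by
      intro n
      induction n with
      | zero =>
        intro W hr hν
        refine ⟨W, le_rfl, hν, fun W' hW' => ?_⟩
        have := Submodule.finrank_lt_finrank_of_lt hW'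
        omega
      | succ n ih =>
        intro W hr hν
        by_cases hmin : ∀ W' < W, ν (W' : Set E) = 0
        · exact ⟨W, le_rfl, hν, hmin⟩
        · push_neg at hmin
          obtain ⟨W', hlt, hν'⟩ := hmin
          have hr' : Module.finrank ℝ W' ≤ n := by
            have := Submodule.finrank_lt_finrank_of_lt hlt
            omega
          obtain ⟨W'', hle, hm⟩ := ih W' hr' hν'
          exact ⟨W'', hle.trans hlt.le, hm⟩
    intro W hν
    exact key (Module.finrank ℝ W) W le_rfl hν
  -- minimal submodules are pairwise a.e. disjoint, hence countably many
  set S : Set (Submodule ℝ E) := {W | Min W} with hS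
  have hdisj : Pairwise (Function.onFun (AEDisjoint ν) fun W : S => ((W : Submodule ℝ E) : Set E)) := by
    intro W W' hne
    have hne' : (W : Submodule ℝ E) ≠ (W' : Submodule ℝ E) := fun h => hne (Subtype.ext h)
    have hinf : ν (((W : Submodule ℝ E) ⊓ (W' : Submodule ℝ E) : Submodule ℝ E) : Set E) = 0 := by
      by_cases hle : (W : Submodule ℝ E) ≤ (W' : Submodule ℝ E)
      · exact absurd (W'.2.2 _ (lt_of_le_of_ne hle hne')) W.2.1
      · refine W.2.2 _ (lt_of_le_of_ne inf_le_left fun h => hle ?_)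
        exact h ▸ inf_le_right
    simpa [AEDisjoint, Function.onFun, Submodule.coe_inf] using hinf
  have hSc : S.Countable := by
    have := Measure.countable_meas_pos_of_disjoint_iUnion₀
      (μ := ν) (As := fun W : S => ((W : Submodule ℝ E) : Set E))
      (fun W => (Submodule.closed_of_finiteDimensional _).measurableSet.nullMeasurableSet)
      hdisj
    have huniv : {W : S | 0 < ν ((W : Submodule ℝ E) : Set E)} = Set.univ := by
      ext W
      simpa using pos_iff_ne_zero.2 W.2.1
    rw [huniv, Set.countable_univ_iff] at this
    exact Set.countable_coe_iff.mp this
  -- choose a nonzero vector in each minimal submodule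
  have hvex : ∀ W : S, ∃ v : E, v ∈ (W : Submodule ℝ E) ∧ v ≠ 0 := by
    intro W
    rcases eq_or_ne (W : Submodule ℝ E) ⊥ with h | h
    · exfalso
      apply W.2.1
      rw [h]
      simpa using h0
    · obtain ⟨v, hv, hv0⟩ := Submodule.exists_mem_ne_zero_of_ne_bot h
      exact ⟨v, hv, hv0⟩
  choose v hvmem hvne using hvex
  -- the bad set of directions
  set U : Set E := {0} ∪ ⋃ W : S, {y : E | inner ℝ (v W) y = (0:ℝ)} with hU
  have hUnull : volume U = 0 := by
    rw [hU]
    refine measure_union_null ?_ ?_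
    · have : ({0} : Set E) = ((⊥ : Submodule ℝ E) : Set E) := by simp
      rw [this]
      refine Measure.addHaar_submodule _ _ ?_
      have : Nontrivial E := by
        refine ⟨EuclideanSpace.single ⟨0, hd⟩ 1, 0, fun h => ?_⟩
        have h2 := congrArg (fun x : E => x ⟨0, hd⟩) h
        rw [EuclideanSpace.single_apply] at h2
        simp only [if_pos rfl] at h2
        have h3 : (0 : EuclideanSpace ℝ (Fin d)) ⟨0, hd⟩ = 0 := rfl
        rw [h3] at h2
        exact one_ne_zero h2
      exact bot_ne_top
    · haveI : Countable S := hSc.to_subtype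
      refine measure_iUnion_null fun W => ?_
      have : {y : E | inner ℝ (v W) y = (0:ℝ)} = ((LinearMap.ker (innerSL ℝ (v W) : E →ₗ[ℝ] ℝ) : Submodule ℝ E) : Set E) := by
        ext y; simp [LinearMap.mem_ker]
      rw [this]
      refine Measure.addHaar_submodule _ _ fun h => ?_
      have : v W ∈ LinearMap.ker (innerSL ℝ (v W) : E →ₗ[ℝ] ℝ) := h ▸ Submodule.mem_top
      rw [LinearMap.mem_ker] at this
      simp only [ContinuousLinearMap.coe_coe, innerSL_apply_apply] at this
      exact hvne W (inner_self_eq_zero.mp this)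
  obtain ⟨y, hy⟩ : ∃ y : E, y ∉ U := by
    by_contra h
    push_neg at h
    have : (Set.univ : Set E) ⊆ U := fun x _ => h x
    have h2 := measure_mono (μ := volume) this
    rw [hUnull] at h2
    have h3 : volume (Set.univ : Set E) ≠ 0 :=
      (isOpen_univ.measure_pos volume ⟨0, trivial⟩).ne'
    exact h3 (le_antisymm h2 zero_le)
  refine ⟨y, fun h => hy (h ▸ Or.inl rfl), ?_⟩
  by_contra hν
  have hker : {z : E | inner ℝ z y = (0:ℝ)} = ((LinearMap.ker (innerSL ℝ y : E →ₗ[ℝ] ℝ) : Submodule ℝ E) : Set E) := by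
    ext z
    simp only [Set.mem_setOf_eq, SetLike.mem_coe, LinearMap.mem_ker, ContinuousLinearMap.coe_coe, innerSL_apply_apply]
    rw [real_inner_comm]
  rw [hker] at hν
  obtain ⟨W, hle, hm⟩ := claimA _ hν
  have hWS : W ∈ S := hm
  have : inner ℝ y (v ⟨W, hWS⟩) = (0:ℝ) := by
    have := hle (hvmem ⟨W, hWS⟩)
    rw [LinearMap.mem_ker] at this
    simpa using this
  exact hy (Or.inr (Set.mem_iUnion.2 ⟨⟨W, hWS⟩, by simp [real_inner_comm, this]⟩))

theorem exists_direction_null_hyperplanes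
    {d : ℕ} (hd : 1 ≤ d) (σ : Measure (EuclideanSpace ℝ (Fin d)))
    [IsFiniteMeasure σ] [NullSingletonClass σ] :
    ∃ y : EuclideanSpace ℝ (Fin d), y ≠ 0 ∧
      ∀ t : ℝ, σ {x | inner ℝ x y = (t : ℝ)} = 0 := by
  set E := EuclideanSpace ℝ (Fin d)
  have hmsub : Measurable (fun p : E × E => p.1 - p.2) :=
    measurable_fst.sub measurable_snd
  set ν : Measure E := (σ.prod σ).map (fun p : E × E => p.1 - p.2) with hν
  haveI : IsFiniteMeasure ν := by
    constructor
    rw [hν, Measure.map_apply hmsub MeasurableSet.univ]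
    exact measure_lt_top _ _
  have h0 : ν {0} = 0 := by
    rw [hν, Measure.map_apply hmsub (measurableSet_singleton 0)]
    rw [Measure.prod_apply (hmsub (measurableSet_singleton 0))]
    have : ∀ x : E, σ (Prod.mk x ⁻¹' ((fun p : E × E => p.1 - p.2) ⁻¹' {0})) = 0 := by
      intro x
      have : Prod.mk x ⁻¹' ((fun p : E × E => p.1 - p.2) ⁻¹' {0}) = {x} := by
        ext z
        simp [sub_eq_zero, eq_comm]
      rw [this]
      exact measure_singleton x
    simp [this]
  obtain ⟨y, hy0, hynull⟩ := core_lemma hd ν h0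
  refine ⟨y, hy0, fun t => ?_⟩
  have hclosed : ∀ s : ℝ, IsClosed {x : E | inner ℝ x y = s} := by
    intro s
    have : {x : E | inner ℝ x y = s} = (fun x : E => (inner ℝ x y : ℝ)) ⁻¹' {s} := rfl
    rw [this]
    exact (isClosed_singleton).preimage (continuous_id.inner continuous_const)
  by_contra ht
  have hsub : {x : E | inner ℝ x y = t} ×ˢ {x : E | inner ℝ x y = t}
      ⊆ (fun p : E × E => p.1 - p.2) ⁻¹' {z : E | inner ℝ z y = (0:ℝ)} := by
    rintro ⟨a, b⟩ ⟨ha, hb⟩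
    simp only [Set.mem_setOf_eq, Set.mem_preimage] at *
    rw [inner_sub_left, ha, hb, sub_self]
  have key : σ {x : E | inner ℝ x y = t} * σ {x : E | inner ℝ x y = t} ≤ ν {z : E | inner ℝ z y = (0:ℝ)} := by
    rw [hν, Measure.map_apply hmsub ((hclosed 0).measurableSet)]
    calc σ {x : E | inner ℝ x y = t} * σ {x : E | inner ℝ x y = t}
        = (σ.prod σ) ({x : E | inner ℝ x y = t} ×ˢ {x : E | inner ℝ x y = t}) :=
          (Measure.prod_prod _ _).symm
      _ ≤ _ := measure_mono hsub
  rw [hynull] at key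
  exact ht (mul_self_eq_zero.mp (le_antisymm key zero_le))
end

section
/- Let $\sigma$ be a finite non-atomic Borel measure on $\mathbb{R}^d$ and let $b_1, \dotsc, b_k$ be non-negative reals with $b_1 + \dotsb + b_k < \sigma(\mathbb{R}^d)$. Then there exist pairwise disjoint measurable sets $E_0, E_1, \dotsc, E_k$ covering $\mathbb{R}^d$ such that $\sigma(E_j) = b_j$ for $j = 1, \dotsc, k$, and such that for all $i \neq j$ with $i, j \geq 1$, the distance between $E_i$ and $E_j$ is strictly positive. -/
open MeasureTheory

open MeasureTheory Metric Set
open scoped ENNReal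

variable {X : Type*} [MetricSpace X] [MeasurableSpace X] [OpensMeasurableSpace X]
  [SecondCountableTopology X]

lemma step_small (μ : Measure X) (K : Set X) (δ : ℝ) (hδ : 0 < δ)
    (hne : μ K ≠ 0) : ∃ x, μ (K ∩ closedBall x δ) ≠ 0 := by
  have hX : Nonempty X := ⟨(nonempty_of_measure_ne_zero hne).choose⟩
  by_contra h
  push_neg at h
  have hcov : K ⊆ ⋃ n, K ∩ closedBall (TopologicalSpace.denseSeq X n) δ := by
    intro x hx
    obtain ⟨n, hn⟩ := (TopologicalSpace.denseRange_denseSeq X).exists_dist_lt x hδ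
    exact mem_iUnion.2 ⟨n, hx, mem_closedBall.2 hn.le⟩
  have h2 : μ K ≤ 0 := by
    refine (measure_mono hcov).trans ((measure_iUnion_le _).trans ?_)
    simp [h]
  exact hne (le_antisymm h2 zero_le)

lemma exists_small_piece (μ : Measure X) [IsFiniteMeasure μ] [NullSingletonClass μ]
    (A : Set X) (hA : MeasurableSet A) (hne : μ A ≠ 0) (ε : ℝ≥0∞) (hε : ε ≠ 0) :
    ∃ B, MeasurableSet B ∧ B ⊆ A ∧ μ B ≠ 0 ∧ μ B ≤ ε := by
  by_contra hcon
  push_neg at hcon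
  have key : ∀ B, MeasurableSet B → B ⊆ A → μ B ≠ 0 → ε < μ B := hcon
  -- build a nested sequence of positive-measure pieces with shrinking diameter
  have step : ∀ n : ℕ, ∀ K : Set X,
      (MeasurableSet K ∧ K ⊆ A ∧ μ K ≠ 0) → ∃ K', (MeasurableSet K' ∧ K' ⊆ A ∧ μ K' ≠ 0) ∧
        K' ⊆ K ∧ ∃ x, K' ⊆ closedBall x ((1/2) ^ n) := by
    intro n K hK
    obtain ⟨x, hx⟩ := step_small μ K ((1/2) ^ n) (by positivity) hK.2.2
    exact ⟨K ∩ closedBall x ((1/2) ^ n),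
      ⟨hK.1.inter measurableSet_closedBall, (inter_subset_left).trans hK.2.1, hx⟩,
      inter_subset_left, x, inter_subset_right⟩
  have step' : ∀ n : ℕ, ∀ K : Set X, ∃ K',
      (MeasurableSet K ∧ K ⊆ A ∧ μ K ≠ 0) → ((MeasurableSet K' ∧ K' ⊆ A ∧ μ K' ≠ 0) ∧
        K' ⊆ K ∧ ∃ x, K' ⊆ closedBall x ((1/2) ^ n)) := by
    intro n K
    by_cases h : MeasurableSet K ∧ K ⊆ A ∧ μ K ≠ 0
    · obtain ⟨K', h'⟩ := step n K h
      exact ⟨K', fun _ => h'⟩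
    · exact ⟨∅, fun h' => absurd h' h⟩
  choose F hF using step'
  set g : ℕ → Set X := fun n => Nat.rec A (fun n Kn => F n Kn) n with hg
  have hg0 : g 0 = A := rfl
  have hgs : ∀ n, g (n + 1) = F n (g n) := fun n => rfl
  have inv : ∀ n, MeasurableSet (g n) ∧ g n ⊆ A ∧ μ (g n) ≠ 0 := by
    intro n
    induction n with
    | zero => exact ⟨hA, subset_rfl, hne⟩
    | succ n ih => rw [hgs]; exact (hF n (g n) ih).1
  have hmono : ∀ n, g (n + 1) ⊆ g n := fun n => (hF n (g n) (inv n)).2.1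
  have hball : ∀ n, ∃ x, g (n + 1) ⊆ closedBall x ((1/2) ^ n) :=
    fun n => (hF n (g n) (inv n)).2.2
  have hanti : Antitone g := antitone_nat_of_succ_le hmono
  -- the intersection is a subsingleton but has measure ≥ ε
  have hsub : (⋂ n, g n).Subsingleton := by
    intro x hx y hy
    have hd : ∀ n : ℕ, dist x y ≤ 2 * (1/2) ^ n := by
      intro n
      obtain ⟨c, hc⟩ := hball n
      have hx' := hc (mem_iInter.1 hx (n + 1))
      have hy' := hc (mem_iInter.1 hy (n + 1))
      calc dist x y ≤ dist x c + dist y c := dist_triangle_right x y c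
        _ ≤ (1/2) ^ n + (1/2) ^ n := add_le_add hx' hy'
        _ = 2 * (1/2) ^ n := by ring
    have htd : Filter.Tendsto (fun n : ℕ => 2 * (1/2 : ℝ) ^ n) Filter.atTop (nhds 0) := by
      have := (tendsto_pow_atTop_nhds_zero_of_lt_one (by norm_num : (0:ℝ) ≤ 1/2)
        (by norm_num)).const_mul (2:ℝ)
      simpa using this
    have : dist x y ≤ 0 := ge_of_tendsto htd (Filter.Eventually.of_forall hd)
    exact dist_le_zero.1 this
  have hzero : μ (⋂ n, g n) = 0 := hsub.measure_zero μ
  have hlim : Filter.Tendsto (fun n => μ (g n)) Filter.atTop (nhds (μ (⋂ n, g n))) :=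
    tendsto_measure_iInter_atTop (fun n => ((inv n).1).nullMeasurableSet) hanti
      ⟨0, measure_ne_top μ _⟩
  have hge : ε ≤ μ (⋂ n, g n) :=
    ge_of_tendsto hlim (Filter.Eventually.of_forall fun n =>
      (key (g n) (inv n).1 (inv n).2.1 (inv n).2.2).le)
  rw [hzero] at hge
  exact hε (le_antisymm hge zero_le)

lemma exists_subset_measure_eq' (μ : Measure X) [IsFiniteMeasure μ] [NullSingletonClass μ]
    (A : Set X) (hA : MeasurableSet A) (r : ℝ≥0∞) (hr : r ≤ μ A) :
    ∃ B, MeasurableSet B ∧ B ⊆ A ∧ μ B = r := by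
  set adm : Set X → Set X → Prop :=
    fun t u => MeasurableSet u ∧ u ⊆ A \ t ∧ μ t + μ u ≤ r with hadm
  set inv : Set X → Prop := fun t => MeasurableSet t ∧ t ⊆ A ∧ μ t ≤ r with hinvdef
  have step : ∀ t, ∃ u, inv t → (adm t u ∧ ∀ v, adm t v → μ v ≤ 2 * μ u) := by
    intro t
    by_cases hinv : inv t
    · set G := ⨆ (u : Set X) (_ : adm t u), μ u with hG
      by_cases hG0 : G = 0
      · refine ⟨∅, fun _ => ⟨⟨MeasurableSet.empty, empty_subset _, by
          simpa using hinv.2.2⟩, fun v hv => ?_⟩⟩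
        have : μ v ≤ G := le_iSup₂ (f := fun (u : Set X) (_ : adm t u) => μ u) v hv
        simp [hG0] at this
        simp [this]
      · have hGtop : G ≠ ⊤ := by
          refine ne_top_of_le_ne_top (measure_ne_top μ univ) ?_
          exact iSup₂_le fun u _ => measure_mono (subset_univ u)
        have hhalf : G / 2 < G := ENNReal.half_lt_self hG0 hGtop
        rw [hG] at hhalf
        rw [lt_iSup_iff] at hhalf
        obtain ⟨u, hu⟩ := hhalf
        rw [lt_iSup_iff] at hu
        obtain ⟨hu1, hu2⟩ := hu
        refine ⟨u, fun _ => ⟨hu1, fun v hv => ?_⟩⟩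
        have h1 : μ v ≤ G := le_iSup₂ (f := fun (u : Set X) (_ : adm t u) => μ u) v hv
        have h2 : G = 2 * (G / 2) := (ENNReal.mul_div_cancel' (by norm_num) (by norm_num)).symm
        calc μ v ≤ G := h1
          _ = 2 * (G / 2) := h2
          _ ≤ 2 * μ u := mul_le_mul_right hu2.le 2
    · exact ⟨∅, fun h => absurd h hinv⟩
  choose U hU using step
  set t : ℕ → Set X := fun n => Nat.rec ∅ (fun _ tn => tn ∪ U tn) n with ht
  have hts : ∀ n, t (n + 1) = t n ∪ U (t n) := fun n => rfl
  have invs : ∀ n, inv (t n) := by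
    intro n
    induction n with
    | zero =>
      refine ⟨?_, ?_, ?_⟩ <;> simp [show t 0 = (∅ : Set X) from rfl]
    | succ n ih =>
      obtain ⟨⟨hm, hsub, hle⟩, -⟩ := hU (t n) ih
      rw [hts]
      exact ⟨ih.1.union hm, union_subset ih.2.1 (hsub.trans diff_subset),
        le_trans (measure_union_le _ _) hle⟩
  have hdisj : ∀ n, Disjoint (t n) (U (t n)) := by
    intro n
    have := (hU (t n) (invs n)).1.2.1
    exact (subset_diff.1 this).2.symm
  have hμsucc : ∀ n, μ (t (n + 1)) = μ (t n) + μ (U (t n)) := by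
    intro n
    rw [hts, measure_union (hdisj n) (hU (t n) (invs n)).1.1]
  have hmono : Monotone t := monotone_nat_of_le_succ fun n => by
    rw [hts]; exact subset_union_left
  set B := ⋃ n, t n with hB
  have hBm : MeasurableSet B := MeasurableSet.iUnion fun n => (invs n).1
  have hBA : B ⊆ A := iUnion_subset fun n => (invs n).2.1
  have htend : Filter.Tendsto (fun n => μ (t n)) Filter.atTop (nhds (μ B)) :=
    tendsto_measure_iUnion_atTop hmono
  have hμB : μ B ≤ r :=
    le_of_tendsto htend (Filter.Eventually.of_forall fun n => (invs n).2.2)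
  refine ⟨B, hBm, hBA, ?_⟩
  by_contra hne
  have hlt : μ B < r := lt_of_le_of_ne hμB hne
  have hpos : 0 < r - μ B := tsub_pos_of_lt hlt
  have hABne : μ (A \ B) ≠ 0 := by
    have hd : μ (A \ B) = μ A - μ B := measure_diff hBA hBm.nullMeasurableSet (measure_ne_top μ B)
    have : r - μ B ≤ μ A - μ B := by gcongr
    rw [hd]
    exact fun h => absurd (h ▸ (hpos.trans_le this)) (lt_irrefl 0)
  obtain ⟨u, hum, husub, hune, hule⟩ :=
    exists_small_piece μ (A \ B) (hA.diff hBm) hABne (r - μ B) hpos.ne'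
  have hclaim : ∀ n, adm (t n) u := by
    intro n
    refine ⟨hum, husub.trans (diff_subset_diff_right (subset_iUnion t n)), ?_⟩
    calc μ (t n) + μ u ≤ μ B + (r - μ B) :=
          add_le_add (measure_mono (subset_iUnion t n)) hule
      _ = r := add_tsub_cancel_of_le hμB
  have hlow : ∀ n, μ u / 2 ≤ μ (U (t n)) := by
    intro n
    have := (hU (t n) (invs n)).2 u (hclaim n)
    rw [ENNReal.div_le_iff (by norm_num) (by norm_num)]
    calc μ u ≤ 2 * μ (U (t n)) := this
      _ = μ (U (t n)) * 2 := by ring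
  have hgrow : ∀ n : ℕ, (n : ℝ≥0∞) * (μ u / 2) ≤ μ (t n) := by
    intro n
    induction n with
    | zero => simp
    | succ n ih =>
      rw [hμsucc]
      push_cast
      calc ((n : ℝ≥0∞) + 1) * (μ u / 2) = (n : ℝ≥0∞) * (μ u / 2) + μ u / 2 := by ring
        _ ≤ μ (t n) + μ (U (t n)) := add_le_add ih (hlow n)
  have hc2 : μ u / 2 ≠ 0 := by
    simp only [ne_eq, ENNReal.div_eq_zero_iff]
    push_neg
    exact ⟨hune, by norm_num⟩
  have hc2top : μ u / 2 ≠ ⊤ := by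
    exact ne_top_of_le_ne_top (measure_ne_top μ u) ENNReal.half_le_self
  obtain ⟨n, hn⟩ := ENNReal.exists_nat_gt
    (ENNReal.div_lt_top (ne_top_of_le_ne_top (measure_ne_top μ A) hr) hc2).ne
  have : r < (n : ℝ≥0∞) * (μ u / 2) := by
    rwa [ENNReal.div_lt_iff (Or.inl hc2) (Or.inl hc2top)] at hn
  exact absurd ((this.trans_le (hgrow n)).trans_le (invs n).2.2) (lt_irrefl r)

lemma compact_separation {Y : Type*} [MetricSpace Y] {K L : Set Y}
    (hK : IsCompact K) (hL : IsCompact L) (h : Disjoint K L) :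
    ∃ ε > (0 : ℝ), ∀ a ∈ K, ∀ c ∈ L, ε ≤ dist a c := by
  rcases K.eq_empty_or_nonempty with hKe | hKne
  · exact ⟨1, one_pos, fun a ha => absurd (hKe ▸ ha) (notMem_empty a)⟩
  rcases L.eq_empty_or_nonempty with hLe | hLne
  · exact ⟨1, one_pos, fun a _ c hc => absurd (hLe ▸ hc) (notMem_empty c)⟩
  obtain ⟨a₀, ha₀, hmin⟩ := hK.exists_isMinOn hKne (continuous_infDist_pt L).continuousOn
  have hpos : 0 < infDist a₀ L :=
    (hL.isClosed.notMem_iff_infDist_pos hLne).1 (disjoint_left.1 h ha₀)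
  refine ⟨infDist a₀ L, hpos, fun a ha c hc => ?_⟩
  exact le_trans (hmin ha) (infDist_le_dist_of_mem hc)

theorem exists_partition_prescribed_masses_separated
    {d : ℕ} (σ : Measure (EuclideanSpace ℝ (Fin d)))
    [IsFiniteMeasure σ] [NullSingletonClass σ]
    {k : ℕ} (hk : 0 < k) (b : Fin k → ℝ)
    (hb : ∀ j, 0 ≤ b j)
    (hsum : ∑ j, b j < (σ Set.univ).toReal) :
    ∃ E : Fin (k + 1) → Set (EuclideanSpace ℝ (Fin d)),
      (∀ j, MeasurableSet (E j)) ∧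
      Pairwise (fun i j => Disjoint (E i) (E j)) ∧
      (⋃ j, E j) = Set.univ ∧
      (∀ j : Fin k, σ (E j.succ) = ENNReal.ofReal (b j)) ∧
      (∀ i j : Fin k, i ≠ j → ∃ ε > (0 : ℝ),
        ∀ a ∈ E i.succ, ∀ c ∈ E j.succ, ε ≤ dist a c) := by
  classical
  set X := EuclideanSpace ℝ (Fin d) with hX
  set M : ℝ≥0∞ := σ Set.univ with hM
  have hMtop : M ≠ ⊤ := measure_ne_top σ _
  set S : ℝ := ∑ j, b j with hSdef
  have hS0 : 0 ≤ S := Finset.sum_nonneg fun j _ => hb j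
  set δ : ℝ := (M.toReal - S) / (2 * k) with hδdef
  have hδ : 0 < δ := div_pos (sub_pos.2 hsum) (by positivity)
  -- Besicovitch covering with small-mass balls
  set f : X → Set ℝ :=
    fun x => {ρ | 0 < ρ ∧ σ (closedBall x ρ) < ENNReal.ofReal δ} with hfdef
  have hf' : ∀ x ∈ (Set.univ : Set X), ∀ η > (0:ℝ), (f x ∩ Set.Ioo 0 η).Nonempty := by
    intro x _ η hη
    have hanti : Antitone (fun n : ℕ => closedBall x ((η/2) * (1/2)^n)) := by
      intro n m hnm
      exact closedBall_subset_closedBall (by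
        have : ((1:ℝ)/2)^m ≤ (1/2)^n := pow_le_pow_of_le_one (by norm_num) (by norm_num) hnm
        nlinarith)
    have hinter : (⋂ n : ℕ, closedBall x ((η/2) * (1/2)^n)) = {x} := by
      apply Set.Subset.antisymm
      · intro y hy
        have hd : ∀ n : ℕ, dist y x ≤ (η/2) * (1/2)^n := fun n => mem_iInter.1 hy n
        have htd : Filter.Tendsto (fun n : ℕ => (η/2) * (1/2:ℝ)^n) Filter.atTop (nhds 0) := by
          have := (tendsto_pow_atTop_nhds_zero_of_lt_one (by norm_num : (0:ℝ) ≤ 1/2)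
            (by norm_num)).const_mul (η/2)
          simpa using this
        have : dist y x ≤ 0 := ge_of_tendsto htd (Filter.Eventually.of_forall hd)
        simp [dist_le_zero.1 this]
      · intro y hy
        rw [Set.mem_singleton_iff] at hy
        subst hy
        exact mem_iInter.2 fun n => mem_closedBall_self (by positivity)
    have htendb : Filter.Tendsto (fun n : ℕ => σ (closedBall x ((η/2) * (1/2)^n)))
        Filter.atTop (nhds 0) := by
      have := tendsto_measure_iInter_atTop (μ := σ)
        (fun n => measurableSet_closedBall.nullMeasurableSet) hanti ⟨0, measure_ne_top σ _⟩
      rw [hinter] at this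
      simpa [measure_singleton, Function.comp_def] using this
    have hev : ∀ᶠ n : ℕ in Filter.atTop,
        σ (closedBall x ((η/2) * (1/2)^n)) < ENNReal.ofReal δ :=
      htendb.eventually (eventually_lt_nhds (by simp [ENNReal.ofReal_pos.2 hδ]))
    obtain ⟨n, hn⟩ := hev.exists
    refine ⟨(η/2) * (1/2)^n, ⟨⟨by positivity, hn⟩, by positivity, ?_⟩⟩
    have h1 : ((1:ℝ)/2)^n ≤ 1 := pow_le_one₀ (by norm_num) (by norm_num)
    nlinarith
  obtain ⟨t, r, htc, -, htr, hcov, htdisj⟩ :=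
    Besicovitch.exists_disjoint_closedBall_covering_ae σ f Set.univ hf'
      (fun _ => 1) (fun _ _ => one_pos)
  -- t is nonempty since σ univ > 0
  have hMne : M ≠ 0 := by
    intro h
    rw [h] at hsum
    simp at hsum
    linarith
  have htne : t.Nonempty := by
    rcases Set.eq_empty_or_nonempty t with h | h
    · exfalso
      apply hMne
      have : Set.univ \ ⋃ x ∈ t, closedBall x (r x) = Set.univ := by simp [h]
      rw [hM, ← this, hcov]
    · exact h
  obtain ⟨e, he⟩ := htc.exists_eq_range htne
  -- disjoint sequence of balls, avoiding duplicates
  set B : ℕ → Set X := fun n =>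
    if ∀ m < n, e m ≠ e n then closedBall (e n) (r (e n)) else ∅ with hBdef
  have hBn : ∀ n, B n = if ∀ m < n, e m ≠ e n then closedBall (e n) (r (e n)) else ∅ :=
    fun n => rfl
  have het : ∀ n, e n ∈ t := fun n => he ▸ Set.mem_range_self n
  have hBm : ∀ n, MeasurableSet (B n) := by
    intro n
    rw [hBn]
    split
    · exact measurableSet_closedBall
    · exact MeasurableSet.empty
  have hBsmall : ∀ n, σ (B n) < ENNReal.ofReal δ := by
    intro n
    rw [hBn]
    split
    · exact (htr (e n) (het n)).1.2
    · simp [ENNReal.ofReal_pos.2 hδ]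
  have hBdisj : ∀ n m : ℕ, n ≠ m → Disjoint (B n) (B m) := by
    have key : ∀ n m : ℕ, n < m → Disjoint (B n) (B m) := by
      intro n m hnm
      rw [hBn, hBn]
      split
      · split
        · rename_i h1 h2
          exact htdisj (het n) (het m) (h2 n hnm)
        · exact disjoint_empty _
      · exact empty_disjoint _
    intro n m hnm
    rcases lt_or_gt_of_ne hnm with h | h
    · exact key n m h
    · exact (key m n h).symm
  have hBunion : (⋃ n, B n) = ⋃ x ∈ t, closedBall x (r x) := by
    apply Set.Subset.antisymm
    · refine Set.iUnion_subset fun n => ?_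
      rw [hBn]
      split
      · exact Set.subset_biUnion_of_mem (u := fun x => closedBall x (r x)) (het n)
      · exact Set.empty_subset _
    · refine Set.iUnion₂_subset fun x hx => ?_
      rw [he] at hx
      obtain ⟨n, rfl⟩ := hx
      set n₀ := sInf {m | e m = e n} with hn₀
      have hmem : e n₀ = e n := Nat.sInf_mem (⟨n, rfl⟩ : {m | e m = e n}.Nonempty)
      have hcond : ∀ m < n₀, e m ≠ e n₀ := by
        intro m hm hc
        exact absurd (hc.trans hmem) (Nat.notMem_of_lt_sInf hm)
      refine Set.Subset.trans ?_ (Set.subset_iUnion B n₀)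
      rw [hBn, if_pos hcond, hmem]
  have hcovB : σ (⋃ n, B n) = M := by
    apply le_antisymm (measure_mono (Set.subset_univ _))
    rw [hBunion]
    calc M = σ ((⋃ x ∈ t, closedBall x (r x)) ∪
          (Set.univ \ ⋃ x ∈ t, closedBall x (r x))) := by
          rw [Set.union_diff_cancel' (Set.Subset.refl _) (Set.subset_univ _)]
      _ ≤ σ (⋃ x ∈ t, closedBall x (r x)) + σ (Set.univ \ ⋃ x ∈ t, closedBall x (r x)) :=
          measure_union_le _ _
      _ = σ (⋃ x ∈ t, closedBall x (r x)) := by rw [hcov, add_zero]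
  -- partial unions
  set U : ℕ → Set X := fun N => ⋃ i ∈ Finset.range N, B i with hUdef
  have hUsum : ∀ N, σ (U N) = ∑ i ∈ Finset.range N, σ (B i) := by
    intro N
    exact measure_biUnion_finset
      (fun i _ j _ hij => hBdisj i j hij) (fun i _ => hBm i)
  have hUmono : Monotone U := fun N N' h =>
    Set.biUnion_subset_biUnion_left (Finset.range_subset_range.2 h)
  have hUU : (⋃ N, U N) = ⋃ n, B n := by
    apply Set.Subset.antisymm
    · exact Set.iUnion_subset fun N => Set.iUnion₂_subset fun i _ => Set.subset_iUnion B i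
    · refine Set.iUnion_subset fun i => ?_
      refine Set.Subset.trans ?_ (Set.subset_iUnion U (i+1))
      exact Set.subset_biUnion_of_mem (u := B) (Finset.self_mem_range_succ i)
  have htendU : Filter.Tendsto (fun N => σ (U N)) Filter.atTop (nhds M) := by
    have := tendsto_measure_iUnion_atTop (μ := σ) hUmono
    rwa [hUU, hcovB] at this
  have htarget : ENNReal.ofReal (S + k * δ) < M := by
    rw [ENNReal.ofReal_lt_iff_lt_toReal (by positivity) hMtop]
    have hk' : (0:ℝ) < k := Nat.cast_pos.2 hk
    have hkk : (k:ℝ) * δ = (M.toReal - S) / 2 := by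
      rw [hδdef]; field_simp
    linarith
  obtain ⟨N, hN⟩ := (htendU.eventually (eventually_gt_nhds htarget)).exists
  -- real-valued masses and partial sums
  set m : ℕ → ℝ := fun i => (σ (B i)).toReal with hmdef
  have hm0 : ∀ i, 0 ≤ m i := fun i => ENNReal.toReal_nonneg
  have hmδ : ∀ i, m i < δ := by
    intro i
    have := hBsmall i
    rw [hmdef]
    have h2 : (σ (B i)).toReal < (ENNReal.ofReal δ).toReal :=
      ENNReal.toReal_strict_mono ENNReal.ofReal_ne_top this
    rwa [ENNReal.toReal_ofReal hδ.le] at h2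
  set T : ℕ → ℝ := fun n => ∑ i ∈ Finset.range n, m i with hTdef
  have hTU : ∀ n, T n = (σ (U n)).toReal := by
    intro n
    rw [hTdef, hUsum]
    exact (ENNReal.toReal_sum (fun i _ => measure_ne_top σ _)).symm
  have hTmono : Monotone T := fun n n' h =>
    Finset.sum_le_sum_of_subset_of_nonneg (Finset.range_subset_range.2 h) (fun i _ _ => hm0 i)
  have hTsucc : ∀ n, T (n + 1) = T n + m n := fun n => Finset.sum_range_succ m n
  have hTN : S + k * δ ≤ T N := by
    rw [hTU]
    have : ENNReal.ofReal (S + k * δ) ≤ σ (U N) := hN.le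
    rwa [ENNReal.ofReal_le_iff_le_toReal (measure_ne_top σ _)] at this
  -- target thresholds
  set bb : ℕ → ℝ := fun i => if h : i < k then b ⟨i, h⟩ else 0 with hbbdef
  have hbb0 : ∀ i, 0 ≤ bb i := by
    intro i
    rw [hbbdef]
    dsimp only
    split
    · exact hb _
    · exact le_refl 0
  have hbbS : ∑ i ∈ Finset.range k, bb i = S := by
    rw [hSdef, ← Fin.sum_univ_eq_sum_range]
    exact Finset.sum_congr rfl fun j _ => by
      rw [hbbdef]
      dsimp only
      rw [dif_pos j.isLt]
  set w : ℕ → ℝ := fun j => (∑ i ∈ Finset.range j, bb i) + j * δ with hwdef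
  have hw0 : ∀ j, 0 ≤ w j := fun j => by
    have := Finset.sum_nonneg (fun i (_ : i ∈ Finset.range j) => hbb0 i)
    positivity
  have hwmono : Monotone w := by
    intro j j' h
    rw [hwdef]
    dsimp only
    have h1 : ∑ i ∈ Finset.range j, bb i ≤ ∑ i ∈ Finset.range j', bb i :=
      Finset.sum_le_sum_of_subset_of_nonneg (Finset.range_subset_range.2 h) (fun i _ _ => hbb0 i)
    have h2 : (j:ℝ) ≤ j' := Nat.cast_le.2 h
    nlinarith [hδ]
  have hwsucc : ∀ j, w (j + 1) = w j + bb j + δ := by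
    intro j
    rw [hwdef]
    dsimp only
    rw [Finset.sum_range_succ]
    push_cast
    ring
  have hwk : w k = S + k * δ := by rw [hwdef]; dsimp only; rw [hbbS]
  set nn : ℕ → ℕ := fun j => sInf {n | w j ≤ T n} with hnndef
  have hne' : ∀ j ≤ k, {n | w j ≤ T n}.Nonempty := by
    intro j hj
    exact ⟨N, le_trans (hwmono hj) (le_trans (le_of_eq hwk) hTN)⟩
  have hTnn : ∀ j ≤ k, w j ≤ T (nn j) := fun j hj => Nat.sInf_mem (hne' j hj)
  have hTnn' : ∀ j ≤ k, T (nn j) ≤ w j + δ := by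
    intro j hj
    rcases Nat.eq_zero_or_pos (nn j) with h0 | hpos
    · rw [h0]
      have : T 0 = 0 := Finset.sum_range_zero m
      rw [this]
      have := hw0 j
      linarith
    · obtain ⟨p, hp⟩ := Nat.exists_eq_succ_of_ne_zero hpos.ne'
      have hnot : p ∉ {n | w j ≤ T n} :=
        Nat.notMem_of_lt_sInf (hp ▸ Nat.lt_succ_self p : p < nn j)
      simp only [Set.mem_setOf_eq, not_le] at hnot
      rw [hp, hTsucc]
      have := hmδ p
      linarith
  have hnnmono : ∀ i j, i ≤ j → j ≤ k → nn i ≤ nn j := by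
    intro i j hij hj
    exact Nat.sInf_le (le_trans (hwmono hij) (hTnn j hj))
  -- the groups of balls
  set C : Fin k → Set X := fun j => ⋃ i ∈ Finset.Ico (nn j.val) (nn (j.val + 1)), B i with hCdef
  have hCn : ∀ j : Fin k, C j = ⋃ i ∈ Finset.Ico (nn j.val) (nn (j.val + 1)), B i :=
    fun j => rfl
  have hCmeas : ∀ j, MeasurableSet (C j) := fun j =>
    MeasurableSet.biUnion (Finset.Ico _ _).countable_toSet (fun i _ => hBm i)
  have hCsum : ∀ j : Fin k, σ (C j) = ∑ i ∈ Finset.Ico (nn j.val) (nn (j.val + 1)), σ (B i) :=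
    fun j => measure_biUnion_finset (fun i _ i' _ hii' => hBdisj i i' hii') (fun i _ => hBm i)
  have hCmass : ∀ j : Fin k, ENNReal.ofReal (b j) ≤ σ (C j) := by
    intro j
    have hjk : j.val + 1 ≤ k := j.isLt
    have hle : nn j.val ≤ nn (j.val + 1) := hnnmono _ _ (Nat.le_succ _) hjk
    have hsum' : ∑ i ∈ Finset.Ico (nn j.val) (nn (j.val + 1)), m i
        = T (nn (j.val + 1)) - T (nn j.val) := Finset.sum_Ico_eq_sub m hle
    have htoReal : (σ (C j)).toReal = T (nn (j.val + 1)) - T (nn j.val) := by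
      rw [hCsum, ← hsum']
      exact ENNReal.toReal_sum fun i _ => measure_ne_top σ _
    have hlow : b j ≤ (σ (C j)).toReal := by
      rw [htoReal]
      have h1 : w (j.val + 1) ≤ T (nn (j.val + 1)) := hTnn _ hjk
      have h2 : T (nn j.val) ≤ w j.val + δ := hTnn' _ (le_trans (Nat.le_succ _) hjk)
      have h3 : w (j.val + 1) = w j.val + bb j.val + δ := hwsucc j.val
      have h4 : bb j.val = b j := by
        rw [hbbdef]
        dsimp only
        rw [dif_pos j.isLt]
      linarith
    exact ENNReal.ofReal_le_of_le_toReal hlow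
  have hCdisj : ∀ i j : Fin k, i ≠ j → Disjoint (C i) (C j) := by
    have key : ∀ i j : Fin k, i < j → Disjoint (C i) (C j) := by
      intro i j hij
      rw [hCn, hCn]
      refine Set.disjoint_iUnion₂_left.2 fun i1 hi1 => Set.disjoint_iUnion₂_right.2 fun i2 hi2 => ?_
      rw [Finset.mem_Ico] at hi1 hi2
      have hord : nn (i.val + 1) ≤ nn j.val := hnnmono _ _ hij (le_trans (Nat.le_succ _) j.isLt)
      exact hBdisj i1 i2 (by omega)
    intro i j hij
    rcases lt_or_gt_of_ne hij with h | h
    · exact key i j h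
    · exact (key j i h).symm
  have hCcompact : ∀ j, IsCompact (C j) := by
    intro j
    rw [hCn]
    refine (Finset.Ico _ _).finite_toSet.isCompact_biUnion fun i _ => ?_
    rw [hBn]
    split
    · exact isCompact_closedBall _ _
    · exact isCompact_empty
  -- Sierpinski: extract subsets of exact mass
  have hex : ∀ j : Fin k, ∃ B', MeasurableSet B' ∧ B' ⊆ C j ∧ σ B' = ENNReal.ofReal (b j) :=
    fun j => exists_subset_measure_eq' σ (C j) (hCmeas j) _ (hCmass j)
  choose E' hE'm hE'sub hE'val using hex
  set E₀ : Set X := (⋃ j, E' j)ᶜ with hE₀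
  set EE : Fin (k+1) → Set X := fun i => if h : i = 0 then E₀ else E' (i.pred h) with hEEdef
  have hEE0 : EE 0 = E₀ := dif_pos rfl
  have hEEsucc : ∀ j : Fin k, EE j.succ = E' j := by
    intro j
    have h : (j.succ : Fin (k+1)) ≠ 0 := Fin.succ_ne_zero j
    show (if h : j.succ = 0 then E₀ else E' (Fin.pred j.succ h)) = E' j
    rw [dif_neg h, Fin.pred_succ]
  refine ⟨EE, ?_, ?_, ?_, ?_, ?_⟩
  · intro i
    show MeasurableSet (if h : i = 0 then E₀ else E' (i.pred h))
    split
    · exact (MeasurableSet.iUnion fun j => hE'm j).compl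
    · exact hE'm _
  · intro i j hij
    show Disjoint (if h : i = 0 then E₀ else E' (i.pred h))
      (if h : j = 0 then E₀ else E' (j.pred h))
    split
    · split
      · rename_i h1 h2; exact absurd (h1.trans h2.symm) hij
      · exact Disjoint.mono_right (Set.subset_iUnion E' _) disjoint_compl_left
    · split
      · exact (Disjoint.mono_right (Set.subset_iUnion E' _) disjoint_compl_left).symm
      · rename_i h1 h2
        refine (hCdisj _ _ ?_).mono (hE'sub _) (hE'sub _)
        intro hc
        exact hij (by rwa [← Fin.pred_inj (ha := h1) (hb := h2)])
  · apply Set.eq_univ_of_forall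
    intro x
    by_cases hx : x ∈ ⋃ j, E' j
    · obtain ⟨j, hj⟩ := Set.mem_iUnion.1 hx
      exact Set.mem_iUnion.2 ⟨j.succ, (hEEsucc j).symm ▸ hj⟩
    · exact Set.mem_iUnion.2 ⟨0, hEE0.symm ▸ hx⟩
  · intro j
    rw [hEEsucc]
    exact hE'val j
  · intro i j hij
    obtain ⟨ε, hε0, hsep⟩ := compact_separation (hCcompact i) (hCcompact j) (hCdisj i j hij)
    refine ⟨ε, hε0, fun a ha c hc => ?_⟩
    rw [hEEsucc] at ha hc
    exact hsep a (hE'sub i ha) c (hE'sub j hc)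
end

section
/- Let $N \geq 2$, $k \geq N+2$, and let $b_1 \geq b_2 \geq \dotsb \geq b_k > 0$ satisfy $(N-1)b_1 \leq \sum_{j=2}^k b_j$. Then there exist real numbers $t_2, \dotsc, t_k$ such that: (i) $t_2 + \dotsb + t_k = (N-1)b_1$; (ii) $0 \leq t_j \leq b_j$ for all $j$, $t_2 \geq t_3 \geq \dotsb \geq t_k$, and $b_2 - t_2 \geq b_3 - t_3 \geq \dotsb \geq b_k - t_k$; (iii) $(N-2)t_2 \leq \sum_{j=3}^k t_j$; (iv) $(N-1)(b_2 - t_2) \leq \sum_{j=3}^k (b_j - t_j)$. -/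
open Finset

theorem t_lemma
    (N k : ℕ) (hN : 2 ≤ N) (hk : N + 2 ≤ k) (b : ℕ → ℝ)
    (hpos : ∀ j ∈ Icc 1 k, 0 < b j)
    (hmono : ∀ i j, 1 ≤ i → i ≤ j → j ≤ k → b j ≤ b i)
    (hmain : (N - 1 : ℝ) * b 1 ≤ ∑ j ∈ Icc 2 k, b j) :
    ∃ t : ℕ → ℝ,
      (∑ j ∈ Icc 2 k, t j = (N - 1 : ℝ) * b 1) ∧
      (∀ j ∈ Icc 2 k, 0 ≤ t j ∧ t j ≤ b j) ∧
      (∀ i j, 2 ≤ i → i ≤ j → j ≤ k → t j ≤ t i) ∧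
      (∀ i j, 2 ≤ i → i ≤ j → j ≤ k → b j - t j ≤ b i - t i) ∧
      ((N - 2 : ℝ) * t 2 ≤ ∑ j ∈ Icc 3 k, t j) ∧
      ((N - 1 : ℝ) * (b 2 - t 2) ≤ ∑ j ∈ Icc 3 k, (b j - t j)) := by
  have hk4 : 4 ≤ k := by omega
  have hb1pos : 0 < b 1 := hpos 1 (by simp [Finset.mem_Icc]; omega)
  have hb2pos : 0 < b 2 := hpos 2 (by simp [Finset.mem_Icc]; omega)
  have hN1 : (1:ℝ) ≤ (N:ℝ) - 1 := by
    have : (2:ℝ) ≤ (N:ℝ) := by exact_mod_cast hN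
    linarith
  have hcont : ContinuousOn (fun x => ∑ j ∈ Icc 2 k, max (b j - x) 0)
      (Set.Icc 0 (b 2)) := by
    apply Continuous.continuousOn
    apply continuous_finset_sum
    intro j _
    exact (continuous_const.sub continuous_id).max continuous_const
  have hf0 : (∑ j ∈ Icc 2 k, max (b j - (0:ℝ)) 0) = ∑ j ∈ Icc 2 k, b j := by
    apply Finset.sum_congr rfl
    intro j hj
    have hbj : 0 < b j := hpos j (by simp [Finset.mem_Icc] at hj ⊢; omega)
    simp [max_eq_left hbj.le]
  have hfb2 : (∑ j ∈ Icc 2 k, max (b j - b 2) 0) = 0 := by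
    apply Finset.sum_eq_zero
    intro j hj
    simp only [Finset.mem_Icc] at hj
    have : b j ≤ b 2 := hmono 2 j (by omega) hj.1 hj.2
    have : b j - b 2 ≤ 0 := by linarith
    simp [max_eq_right this]
  have key : (N - 1 : ℝ) * b 1 ∈
      Set.Icc ((fun x => ∑ j ∈ Icc 2 k, max (b j - x) 0) (b 2))
        ((fun x => ∑ j ∈ Icc 2 k, max (b j - x) 0) 0) := by
    simp only [hf0, hfb2]
    constructor
    · nlinarith
    · exact hmain
  obtain ⟨lam, hlam, hflam⟩ := intermediate_value_Icc' hb2pos.le hcont key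
  simp only at hflam
  have hlam0 : 0 ≤ lam := hlam.1
  have hlamb2 : lam ≤ b 2 := hlam.2
  refine ⟨fun j => max (b j - lam) 0, hflam, ?_, ?_, ?_, ?_, ?_⟩
  · intro j hj
    beta_reduce
    have hbj : 0 < b j := hpos j (by simp [Finset.mem_Icc] at hj ⊢; omega)
    constructor
    · exact le_max_right _ _
    · rcases le_total (b j - lam) 0 with h | h
      · rw [max_eq_right h]; exact hbj.le
      · rw [max_eq_left h]; linarith
  · intro i j hi hij hjk
    beta_reduce
    have : b j ≤ b i := hmono i j (by omega) hij hjk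
    exact max_le_max (by linarith) le_rfl
  · intro i j hi hij hjk
    beta_reduce
    have hbij : b j ≤ b i := hmono i j (by omega) hij hjk
    rcases le_total (b j - lam) 0 with h | h
    · rw [max_eq_right h]
      rcases le_total (b i - lam) 0 with h' | h'
      · rw [max_eq_right h']; linarith
      · rw [max_eq_left h']; linarith
    · rw [max_eq_left h]
      have h' : 0 ≤ b i - lam := by linarith
      rw [max_eq_left h']
      linarith
  all_goals {
    have hsplit : ∀ g : ℕ → ℝ, ∑ j ∈ Icc 2 k, g j = g 2 + ∑ j ∈ Icc 3 k, g j := by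
      intro g
      have h : Icc 2 k = insert 2 (Icc 3 k) := by
        ext x; simp only [Finset.mem_Icc, Finset.mem_insert]; omega
      rw [h, Finset.sum_insert (by simp [Finset.mem_Icc])]
    have ht2 : max (b 2 - lam) 0 = b 2 - lam := max_eq_left (by linarith)
    have hsum3 : ∑ j ∈ Icc 3 k, max (b j - lam) 0
        = (N - 1 : ℝ) * b 1 - (b 2 - lam) := by
      have := hsplit (fun j => max (b j - lam) 0)
      beta_reduce at this
      rw [this, ht2] at hflam
      linarith
    beta_reduce
    first
    | · -- (iii)
        rw [ht2, hsum3]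
        have hb21 : b 2 ≤ b 1 := hmono 1 2 le_rfl (by omega) (by omega)
        have : (N:ℝ) - 2 = ((N:ℝ) - 1) - 1 := by ring
        nlinarith
    | · -- (iv)
        rw [ht2]
        -- key claim: N * lam ≤ ∑_{j=2}^k min (b j) lam
        have hmin : ∀ j ∈ Icc 2 k, b j - max (b j - lam) 0 = min (b j) lam := by
          intro j _
          rcases le_total (b j) lam with h | h
          · rw [max_eq_right (by linarith), min_eq_left h]; ring
          · rw [max_eq_left (by linarith), min_eq_right h]; ring
        have claim : (N:ℝ) * lam ≤ ∑ j ∈ Icc 2 k, min (b j) lam := by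
          rcases eq_or_lt_of_le hlam0 with h0 | h0
          · rw [← h0]
            simp only [mul_zero]
            apply Finset.sum_nonneg
            intro j hj
            have hbj : 0 < b j := hpos j (by simp [Finset.mem_Icc] at hj ⊢; omega)
            exact le_min hbj.le le_rfl
          · set A := (Icc 2 k).filter (fun j => lam < b j) with hA
            have hAsub : A ⊆ Icc 2 k := Finset.filter_subset _ _
            have h1 : ∑ j ∈ Icc 2 k, max (b j - lam) 0 = ∑ j ∈ A, (b j - lam) := by
              rw [hA, Finset.sum_filter]
              apply Finset.sum_congr rfl
              intro j _
              rcases lt_or_ge lam (b j) with h | h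
              · rw [if_pos h, max_eq_left (by linarith)]
              · rw [if_neg (not_lt.mpr h), max_eq_right (by linarith)]
            have hcard : N ≤ A.card := by
              by_contra hc
              push_neg at hc
              have hcardR : (A.card : ℝ) ≤ (N:ℝ) - 1 := by
                have h' : A.card ≤ N - 1 := by omega
                have := (Nat.cast_le (α := ℝ)).mpr h'
                rw [Nat.cast_sub (by omega)] at this
                simpa using this
              have h2 : ∑ j ∈ A, (b j - lam) ≤ (A.card : ℝ) * (b 1 - lam) := by
                rw [← nsmul_eq_mul]
                apply Finset.sum_le_card_nsmul
                intro j hj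
                have hjm := hAsub hj
                simp only [Finset.mem_Icc] at hjm
                have : b j ≤ b 1 := hmono 1 j le_rfl (by omega) hjm.2
                linarith
              have hb1lam : lam ≤ b 1 := le_trans hlamb2
                (hmono 1 2 le_rfl (by omega) (by omega))
              nlinarith [hflam, h1]
            have hcardR : (N:ℝ) ≤ (A.card : ℝ) := by exact_mod_cast hcard
            calc (N:ℝ) * lam ≤ (A.card : ℝ) * lam := by nlinarith
              _ = ∑ _j ∈ A, lam := by rw [Finset.sum_const, nsmul_eq_mul]
              _ ≤ ∑ j ∈ A, min (b j) lam := by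
                  apply Finset.sum_le_sum
                  intro j hj
                  rw [hA, Finset.mem_filter] at hj
                  exact le_min hj.2.le le_rfl
              _ ≤ ∑ j ∈ Icc 2 k, min (b j) lam := by
                  apply Finset.sum_le_sum_of_subset_of_nonneg hAsub
                  intro j hj _
                  have hbj : 0 < b j := hpos j (by simp [Finset.mem_Icc] at hj ⊢; omega)
                  exact le_min hbj.le hlam0
        have hsum2 : ∑ j ∈ Icc 2 k, (b j - max (b j - lam) 0)
            = ∑ j ∈ Icc 2 k, min (b j) lam := Finset.sum_congr rfl hmin
        have hsplit2 := hsplit (fun j => b j - max (b j - lam) 0)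
        beta_reduce at hsplit2
        rw [ht2] at hsplit2
        have hmin2 : min (b 2) lam = lam := min_eq_right hlamb2
        -- goal : (N-1)*(b 2 - (b 2 - lam)) ≤ ∑_{3..k} (b j - max (b j - lam) 0)
        have : ∑ j ∈ Icc 3 k, (b j - max (b j - lam) 0)
            = ∑ j ∈ Icc 2 k, min (b j) lam - lam := by
          rw [← hsum2, hsplit2]; ring
        rw [this]
        nlinarith [claim]
  }
end

section
/- Let $k > N \geq 1$, let $x_1, \dotsc, x_k \in \mathbb{R}^d$ be distinct, and let $b_1 \geq \dotsb \geq b_k > 0$ with $b_1 + \dotsb + b_k = 1$ and $(N-1)b_1 \leq \sum_{j=2}^k b_j$. Then there exists a symmetric probability measure $P$ on $(\mathbb{R}^d)^N$, each of whose marginals equals $\rho = \sum_{j=1}^k b_j \delta_{x_j}$, such that $P$ gives zero mass to the diagonal set $\{(y_1,\dotsc,y_N) : \exists i \neq j,\ y_i = y_j\}$. -/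
open MeasureTheory
open scoped ENNReal

lemma map_finset_sum' {α β ι : Type*} [MeasurableSpace α] [MeasurableSpace β]
    {f : α → β} (hf : Measurable f) (s : Finset ι) (m : ι → Measure α) :
    Measure.map f (∑ i ∈ s, m i) = ∑ i ∈ s, Measure.map f (m i) := by
  classical
  induction s using Finset.induction_on with
  | empty => simp
  | insert _ _ h ih => rw [Finset.sum_insert h, Finset.sum_insert h, Measure.map_add _ _ hf, ih]

lemma fract_shift_invariant {a : ℝ} (ha0 : 0 ≤ a) (ha1 : a < 1) :
    Measure.map (fun t => Int.fract (t + a)) (volume.restrict (Set.Ico (0:ℝ) 1)) =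
      volume.restrict (Set.Ico (0:ℝ) 1) := by
  have hmf : Measurable fun t : ℝ => Int.fract (t + a) :=
    measurable_fract.comp (measurable_add_const a)
  ext A hA
  rw [Measure.map_apply hmf hA, Measure.restrict_apply (hmf hA), Measure.restrict_apply hA]
  have hset : (fun t => Int.fract (t + a)) ⁻¹' A ∩ Set.Ico 0 1 =
      ((· + a) ⁻¹' (A ∩ Set.Ico a 1)) ∪ ((· + (a - 1)) ⁻¹' (A ∩ Set.Ico 0 a)) := by
    ext t
    simp only [Set.mem_inter_iff, Set.mem_preimage, Set.mem_Ico, Set.mem_union]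
    constructor
    · rintro ⟨hfA, ht0, ht1⟩
      by_cases hlt : t + a < 1
      · have hfr : Int.fract (t + a) = t + a := Int.fract_eq_self.mpr ⟨by linarith, hlt⟩
        left; rw [hfr] at hfA; exact ⟨hfA, by linarith, hlt⟩
      · push_neg at hlt
        have hfr : Int.fract (t + a) = t + (a - 1) := by
          have h3 : Int.fract (t + (a-1) + (1:ℤ)) = Int.fract (t + (a-1)) := Int.fract_add_intCast _ _
          have h2 : Int.fract (t + (a-1)) = t + (a-1) :=
            Int.fract_eq_self.mpr ⟨by linarith, by linarith⟩
          calc Int.fract (t + a) = Int.fract (t + (a-1) + (1:ℤ)) := by push_cast; ring_nf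
            _ = t + (a - 1) := by rw [h3, h2]
        right; rw [hfr] at hfA; exact ⟨hfA, by linarith, by linarith⟩
    · rintro (⟨hA', h1, h2⟩ | ⟨hA', h1, h2⟩)
      · have hfr : Int.fract (t + a) = t + a := Int.fract_eq_self.mpr ⟨by linarith, h2⟩
        exact ⟨by rwa [hfr], by linarith, by linarith⟩
      · have hfr : Int.fract (t + a) = t + (a - 1) := by
          have h3 : Int.fract (t + (a-1) + (1:ℤ)) = Int.fract (t + (a-1)) := Int.fract_add_intCast _ _
          have h2' : Int.fract (t + (a-1)) = t + (a-1) :=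
            Int.fract_eq_self.mpr ⟨by linarith, by linarith⟩
          calc Int.fract (t + a) = Int.fract (t + (a-1) + (1:ℤ)) := by push_cast; ring_nf
            _ = t + (a - 1) := by rw [h3, h2']
        exact ⟨by rwa [hfr], by linarith, by linarith⟩
  rw [hset]
  have hm2 : MeasurableSet ((· + (a - 1)) ⁻¹' (A ∩ Set.Ico 0 a)) :=
    (hA.inter measurableSet_Ico).preimage (measurable_add_const (a - 1))
  have hdisj : Disjoint ((· + a) ⁻¹' (A ∩ Set.Ico a 1)) ((· + (a - 1)) ⁻¹' (A ∩ Set.Ico 0 a)) := by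
    rw [Set.disjoint_left]
    rintro t ⟨_, _, h2⟩ ⟨_, h3, _⟩
    simp only at *
    linarith
  rw [measure_union hdisj hm2, measure_preimage_add_right, measure_preimage_add_right]
  have : A ∩ Set.Ico 0 1 = (A ∩ Set.Ico a 1) ∪ (A ∩ Set.Ico 0 a) := by
    rw [← Set.inter_union_distrib_left, Set.union_comm, Set.Ico_union_Ico_eq_Ico ha0 ha1.le]
  rw [this, measure_union _ (hA.inter measurableSet_Ico)]
  rw [Set.disjoint_left]
  rintro t ⟨_, h1, _⟩ ⟨_, _, h2⟩
  linarith

section Idx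
variable {k : ℕ} (hk : 0 < k) (c : ℕ → ℝ)

noncomputable def nfun (t : ℝ) : ℕ := ((Finset.range k).filter (fun j => c (j+1) ≤ t)).card

noncomputable def idxfun (t : ℝ) : Fin k := ⟨min (nfun (k := k) c t) (k-1), by omega⟩

lemma nfun_mono : Monotone (nfun (k := k) c) := by
  intro t t' h
  refine Finset.card_le_card ?_
  intro j hj
  simp only [Finset.mem_filter] at *
  exact ⟨hj.1, le_trans hj.2 h⟩

lemma measurable_idxfun : Measurable (idxfun hk c) := by
  have h1 : Measurable (nfun (k := k) c) := (nfun_mono c).measurable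
  exact (measurable_from_top (f := fun m : ℕ => (⟨min m (k-1), by omega⟩ : Fin k))).comp h1

lemma nfun_eq (hcmono : Monotone c) {m : ℕ} (hm : m < k) {t : ℝ}
    (h1 : c m ≤ t) (h2 : t < c (m+1)) : nfun (k := k) c t = m := by
  have : (Finset.range k).filter (fun j => c (j+1) ≤ t) = Finset.range m := by
    ext j
    simp only [Finset.mem_filter, Finset.mem_range]
    constructor
    · rintro ⟨hj, hcj⟩
      by_contra h
      push_neg at h
      exact absurd (le_trans (hcmono (by omega : m+1 ≤ j+1)) hcj) (not_le.mpr h2)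
    · intro hj
      exact ⟨by omega, le_trans (hcmono (by omega : j+1 ≤ m)) h1⟩
  rw [nfun, this, Finset.card_range]

lemma idxfun_eq (hcmono : Monotone c) {m : ℕ} (hm : m < k) {t : ℝ}
    (h1 : c m ≤ t) (h2 : t < c (m+1)) : idxfun hk c t = ⟨m, hm⟩ := by
  have := nfun_eq c hcmono hm h1 h2
  simp only [idxfun, this]
  exact Fin.ext (by simp; omega)

lemma idx_exists (hk : 0 < k) (hc0 : c 0 = 0) (hck : c k = 1) {t : ℝ}
    (ht0 : 0 ≤ t) (ht1 : t < 1) : ∃ m, m < k ∧ c m ≤ t ∧ t < c (m+1) := by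
  have hkey : t < c (k - 1 + 1) := by rw [show k - 1 + 1 = k from by omega, hck]; exact ht1
  classical
  have hP : ∃ j, t < c (j+1) := ⟨k-1, hkey⟩
  refine ⟨Nat.find hP, ?_, ?_, Nat.find_spec hP⟩
  · have := Nat.find_min' hP hkey
    omega
  · rcases Nat.eq_zero_or_pos (Nat.find hP) with h | h
    · rw [h, hc0]; exact ht0
    · have := Nat.find_min hP (m := Nat.find hP - 1) (by omega)
      push_neg at this
      rwa [show Nat.find hP - 1 + 1 = Nat.find hP from by omega] at this

lemma idxfun_spec (hcmono : Monotone c) (hc0 : c 0 = 0) (hck : c k = 1) {t : ℝ}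
    (ht0 : 0 ≤ t) (ht1 : t < 1) :
    c (idxfun hk c t) ≤ t ∧ t < c ((idxfun hk c t : ℕ) + 1) := by
  obtain ⟨m, hm, h1, h2⟩ := idx_exists c hk hc0 hck ht0 ht1
  rw [idxfun_eq hk c hcmono hm h1 h2]
  exact ⟨h1, h2⟩

lemma idx_separation {N : ℕ} (hk : 0 < k) (hN : 0 < N) (hcmono : Monotone c)
    (hc0 : c 0 = 0) (hck : c k = 1) (b' : ℕ → ℝ) (hcsucc : ∀ m, c (m+1) = c m + b' m)
    (hb : ∀ m, b' m * N ≤ 1) (t : ℝ) (i j : Fin N) (hij : i ≠ j)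
    (heq : idxfun hk c (Int.fract (t + (i:ℕ)/(N:ℝ))) =
           idxfun hk c (Int.fract (t + (j:ℕ)/(N:ℝ)))) : False := by
  have hNR : (0:ℝ) < N := by exact_mod_cast hN
  have hu := idxfun_spec hk c hcmono hc0 hck
    (Int.fract_nonneg (t + (i:ℕ)/(N:ℝ))) (Int.fract_lt_one (t + (i:ℕ)/(N:ℝ)))
  have hv := idxfun_spec hk c hcmono hc0 hck
    (Int.fract_nonneg (t + (j:ℕ)/(N:ℝ))) (Int.fract_lt_one (t + (j:ℕ)/(N:ℝ)))
  rw [heq] at hu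
  set m : ℕ := (idxfun hk c (Int.fract (t + (j:ℕ)/(N:ℝ))) : ℕ) with hm
  have hsucc := hcsucc m
  have habs : |Int.fract (t + (i:ℕ)/(N:ℝ)) - Int.fract (t + (j:ℕ)/(N:ℝ))| < b' m := by
    rw [abs_sub_lt_iff]
    constructor <;> [skip; skip] <;>
      · have h1 := hu.1; have h2 := hu.2; have h3 := hv.1; have h4 := hv.2
        linarith
  set w : ℤ := ((i:ℕ) : ℤ) - ((j:ℕ) : ℤ) +
      (N : ℤ) * (⌊t + (j:ℕ)/(N:ℝ)⌋ - ⌊t + (i:ℕ)/(N:ℝ)⌋) with hwdef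
  have hcast : (w:ℝ) = N * (Int.fract (t + (i:ℕ)/(N:ℝ)) - Int.fract (t + (j:ℕ)/(N:ℝ))) := by
    rw [← Int.self_sub_floor, ← Int.self_sub_floor, hwdef]
    push_cast
    field_simp
    ring
  have hw0 : w ≠ 0 := by
    intro h
    have hvij : (i:ℕ) ≠ (j:ℕ) := fun hh => hij (Fin.ext hh)
    have hiN : (i:ℕ) < N := i.isLt
    have hjN : (j:ℕ) < N := j.isLt
    set z : ℤ := ⌊t + (j:ℕ)/(N:ℝ)⌋ - ⌊t + (i:ℕ)/(N:ℝ)⌋ with hz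
    have heq2 : ((i:ℕ) : ℤ) - ((j:ℕ) : ℤ) = (N:ℤ) * (-z) := by
      rw [mul_neg]
      rw [hwdef] at h
      linarith
    rcases lt_trichotomy z 0 with hzlt | hzeq | hzgt
    · have h1 : (N:ℤ) * 1 ≤ (N:ℤ) * (-z) :=
        mul_le_mul_of_nonneg_left (by omega) (by positivity)
      rw [mul_one] at h1
      rw [← heq2] at h1
      omega
    · rw [hzeq, neg_zero, mul_zero] at heq2
      omega
    · have h1 : (N:ℤ) * (-z) ≤ (N:ℤ) * (-1) :=
        mul_le_mul_of_nonneg_left (by omega) (by positivity)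
      rw [← heq2] at h1
      omega
  have h1le : (1:ℝ) ≤ |(w:ℝ)| := by
    have := Int.one_le_abs hw0
    calc (1:ℝ) = ((1:ℤ):ℝ) := by norm_num
      _ ≤ ((|w|:ℤ):ℝ) := by exact_mod_cast this
      _ = |(w:ℝ)| := by push_cast; rfl
  have hfin : |(w:ℝ)| < 1 := by
    rw [hcast, abs_mul, abs_of_pos hNR]
    calc (N:ℝ) * |Int.fract (t + (i:ℕ)/(N:ℝ)) - Int.fract (t + (j:ℕ)/(N:ℝ))|
        < N * b' m := by exact mul_lt_mul_of_pos_left habs hNR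
      _ ≤ 1 := by have := hb m; linarith
  linarith

end Idx

theorem exists_finite_cost_plan_atomic
    {d N k : ℕ} (hN : 1 ≤ N) (hk : N < k)
    (x : Fin k → EuclideanSpace ℝ (Fin d)) (hx : Function.Injective x)
    (b : Fin k → ℝ)
    (hpos : ∀ j, 0 < b j)
    (hmono : ∀ i j : Fin k, i ≤ j → b j ≤ b i)
    (hsum : ∑ j, b j = 1)
    (hmain : ((N : ℝ) - 1) * b ⟨0, by omega⟩ ≤ ∑ j ∈ Finset.univ \ {(⟨0, by omega⟩ : Fin k)}, b j) :
    ∃ P : Measure (Fin N → EuclideanSpace ℝ (Fin d)),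
      IsProbabilityMeasure P ∧
      (∀ s : Equiv.Perm (Fin N), Measure.map (fun X => X ∘ s) P = P) ∧
      (∀ i : Fin N, Measure.map (fun X => X i) P =
        ∑ j : Fin k, ENNReal.ofReal (b j) • Measure.dirac (x j)) ∧
      P {X | ∃ i j : Fin N, i ≠ j ∧ X i = X j} = 0 := by
  classical
  have hkpos : 0 < k := by omega
  have hNpos : 0 < N := hN
  have hNR : (0:ℝ) < N := by exact_mod_cast hNpos
  -- the weights as a function on ℕ and partial sums
  set b' : ℕ → ℝ := fun n => if h : n < k then b ⟨n, h⟩ else 0 with hb'def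
  have hb'nonneg : ∀ n, 0 ≤ b' n := by
    intro n
    by_cases h : n < k
    · simp only [hb'def, dif_pos h]; exact (hpos _).le
    · simp only [hb'def, dif_neg h]; exact le_refl _
  have hb'fin : ∀ j : Fin k, b' (j:ℕ) = b j := by
    intro j
    simp only [hb'def, dif_pos j.isLt]
  set c : ℕ → ℝ := fun m => ∑ i ∈ Finset.range m, b' i with hcdef
  have hcsucc : ∀ m, c (m+1) = c m + b' m := fun m => Finset.sum_range_succ _ m
  have hcmono : Monotone c := by
    apply monotone_nat_of_le_succ
    intro m
    rw [hcsucc m]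
    linarith [hb'nonneg m]
  have hc0 : c 0 = 0 := Finset.sum_range_zero _
  have hck : c k = 1 := by
    show ∑ i ∈ Finset.range k, b' i = 1
    rw [← Fin.sum_univ_eq_sum_range b' k]
    rw [Finset.sum_congr rfl (fun j _ => hb'fin j)]
    exact hsum
  -- the max-weight bound
  have hb0 : b ⟨0, by omega⟩ * N ≤ 1 := by
    have hsd : ∑ j ∈ Finset.univ \ {(⟨0, by omega⟩ : Fin k)}, b j
        = 1 - b ⟨0, by omega⟩ := by
      rw [Finset.sum_sdiff_eq_sub (Finset.subset_univ _), hsum, Finset.sum_singleton]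
    rw [hsd] at hmain
    nlinarith [hmain]
  have hbmax : ∀ m, b' m * N ≤ 1 := by
    intro m
    have hle : b' m ≤ b ⟨0, by omega⟩ := by
      by_cases h : m < k
      · simp only [hb'def, dif_pos h]
        exact hmono ⟨0, by omega⟩ ⟨m, h⟩ (by exact Fin.mk_le_mk.mpr (Nat.zero_le m))
      · simp only [hb'def, dif_neg h]
        exact (hpos _).le
    calc b' m * N ≤ b ⟨0, by omega⟩ * N := by
          exact mul_le_mul_of_nonneg_right hle (by positivity)
      _ ≤ 1 := hb0
  -- base measure and index map
  set μ : Measure ℝ := volume.restrict (Set.Ico (0:ℝ) 1) with hμdef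
  haveI hμprob : IsProbabilityMeasure μ := by
    constructor
    rw [hμdef, Measure.restrict_apply_univ, Real.volume_Ico]
    norm_num
  set F : ℝ → (EuclideanSpace ℝ (Fin d)) := fun t => x (idxfun hkpos c t) with hFdef
  have hxmeas : Measurable x := measurable_from_top
  have hFmeas : Measurable F := hxmeas.comp (measurable_idxfun hkpos c)
  set ρ : Measure (EuclideanSpace ℝ (Fin d)) := ∑ j : Fin k, ENNReal.ofReal (b j) • Measure.dirac (x j) with hρdef
  -- the single-particle marginal of F
  have hmapF : Measure.map F μ = ρ := by
    ext A hA
    rw [Measure.map_apply hFmeas hA, hμdef, Measure.restrict_apply (hFmeas hA)]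
    have hset : F ⁻¹' A ∩ Set.Ico 0 1 =
        ⋃ j : Fin k, (if x j ∈ A then Set.Ico (c (j:ℕ)) (c ((j:ℕ)+1)) else ∅) := by
      ext t
      simp only [Set.mem_inter_iff, Set.mem_preimage, Set.mem_Ico, Set.mem_iUnion]
      constructor
      · rintro ⟨hFA, ht0, ht1⟩
        obtain ⟨m, hm, h1, h2⟩ := idx_exists c hkpos hc0 hck ht0 ht1
        refine ⟨⟨m, hm⟩, ?_⟩
        rw [hFdef] at hFA
        simp only at hFA
        rw [idxfun_eq hkpos c hcmono hm h1 h2] at hFA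
        rw [if_pos hFA]
        exact ⟨h1, h2⟩
      · rintro ⟨j, hj⟩
        by_cases hxj : x j ∈ A
        · rw [if_pos hxj] at hj
          obtain ⟨h1, h2⟩ := hj
          have ht0 : (0:ℝ) ≤ t := le_trans (by rw [← hc0]; exact hcmono (Nat.zero_le _)) h1
          have ht1 : t < 1 := lt_of_lt_of_le h2 (by rw [← hck]; exact hcmono j.isLt)
          have hidx := idxfun_eq hkpos c hcmono j.isLt h1 h2
          refine ⟨?_, ht0, ht1⟩
          rw [hFdef]
          simp only
          rw [hidx]
          simpa using hxj
        · rw [if_neg hxj] at hj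
          exact absurd hj (Set.notMem_empty t)
    rw [hset, measure_iUnion, tsum_fintype, hρdef, Measure.finset_sum_apply]
    · refine Finset.sum_congr rfl fun j _ => ?_
      rw [Measure.smul_apply, Measure.dirac_apply' _ hA]
      by_cases hxj : x j ∈ A
      · rw [if_pos hxj, Real.volume_Ico, Set.indicator_of_mem hxj]
        simp only [Pi.one_apply, smul_eq_mul, mul_one]
        congr 1
        rw [hcsucc (j:ℕ), hb'fin j]
        ring
      · rw [if_neg hxj, Set.indicator_of_notMem hxj]
        simp
    · intro i j hij
      simp only [Function.onFun]
      by_cases hxi : x i ∈ A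
      · by_cases hxj : x j ∈ A
        · rw [if_pos hxi, if_pos hxj]
          have hvij : (i:ℕ) ≠ (j:ℕ) := fun hh => hij (Fin.ext hh)
          rcases Nat.lt_or_ge (i:ℕ) (j:ℕ) with h | h
          · exact Set.Ico_disjoint_Ico.mpr
              (le_trans (min_le_left _ _) (le_trans (hcmono (by omega)) (le_max_right _ _)))
          · exact Set.Ico_disjoint_Ico.mpr
              (le_trans (min_le_right _ _) (le_trans (hcmono (by omega)) (le_max_left _ _)))
        · rw [if_neg hxj]; exact Set.disjoint_empty _
      · rw [if_neg hxi]; exact Set.empty_disjoint _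
    · intro j
      by_cases hxj : x j ∈ A
      · rw [if_pos hxj]; exact measurableSet_Ico
      · rw [if_neg hxj]; exact MeasurableSet.empty
  -- the N-point map
  set G : ℝ → (Fin N → (EuclideanSpace ℝ (Fin d))) := fun t i => F (Int.fract (t + (i:ℕ)/(N:ℝ))) with hGdef
  have hGmeas : Measurable G :=
    measurable_pi_lambda _ fun i =>
      hFmeas.comp (measurable_fract.comp (measurable_add_const _))
  have hshift : ∀ i : Fin N,
      Measure.map (fun t => F (Int.fract (t + (i:ℕ)/(N:ℝ)))) μ = ρ := by
    intro i
    have hmf : Measurable fun t : ℝ => Int.fract (t + (i:ℕ)/(N:ℝ)) :=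
      measurable_fract.comp (measurable_add_const _)
    have h0 : (0:ℝ) ≤ (i:ℕ)/(N:ℝ) := by positivity
    have h1 : ((i:ℕ):ℝ)/(N:ℝ) < 1 := by
      rw [div_lt_one hNR]
      exact_mod_cast i.isLt
    rw [show (fun t => F (Int.fract (t + (i:ℕ)/(N:ℝ)))) =
        F ∘ (fun t => Int.fract (t + (i:ℕ)/(N:ℝ))) from rfl]
    rw [← Measure.map_map hFmeas hmf, hμdef, fract_shift_invariant h0 h1, ← hμdef, hmapF]
  set P0 : Measure (Fin N → (EuclideanSpace ℝ (Fin d))) := Measure.map G μ with hP0def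
  haveI hP0prob : IsProbabilityMeasure P0 := Measure.isProbabilityMeasure_map hGmeas.aemeasurable
  have hmarg : ∀ i : Fin N, Measure.map (fun X => X i) P0 = ρ := by
    intro i
    rw [hP0def, Measure.map_map (measurable_pi_apply i) hGmeas]
    exact hshift i
  -- diagonal
  set D : Set (Fin N → (EuclideanSpace ℝ (Fin d))) := {X | ∃ i j : Fin N, i ≠ j ∧ X i = X j} with hDdef
  have hD : MeasurableSet D := by
    have : D = ⋃ i, ⋃ j, {X : Fin N → (EuclideanSpace ℝ (Fin d)) | i ≠ j ∧ X i = X j} := by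
      ext X; simp [hDdef]
    rw [this]
    refine MeasurableSet.iUnion fun i => MeasurableSet.iUnion fun j => ?_
    by_cases hij : i = j
    · simp [hij]
    · have : {X : Fin N → (EuclideanSpace ℝ (Fin d)) | i ≠ j ∧ X i = X j} = {X | X i = X j} := by
        ext X; simp [hij]
      rw [this]
      exact measurableSet_eq_fun (measurable_pi_apply i) (measurable_pi_apply j)
  have hGD : G ⁻¹' D = ∅ := by
    ext t
    simp only [Set.mem_preimage, Set.mem_empty_iff_false, iff_false, hDdef, Set.mem_setOf_eq]
    rintro ⟨i, j, hij, heqv⟩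
    have heqx : x (idxfun hkpos c (Int.fract (t + (i:ℕ)/(N:ℝ)))) =
        x (idxfun hkpos c (Int.fract (t + (j:ℕ)/(N:ℝ)))) := heqv
    exact idx_separation c hkpos hNpos hcmono hc0 hck b' hcsucc hbmax t i j hij (hx heqx)
  have hP0D : P0 D = 0 := by
    rw [hP0def, Measure.map_apply hGmeas hD, hGD]
    exact measure_empty
  -- symmetrization
  have hcompmeas : ∀ s : Equiv.Perm (Fin N), Measurable fun X : Fin N → (EuclideanSpace ℝ (Fin d)) => X ∘ s :=
    fun s => measurable_pi_lambda _ fun i => measurable_pi_apply (s i)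
  set P : Measure (Fin N → (EuclideanSpace ℝ (Fin d))) :=
    (N.factorial : ℝ≥0∞)⁻¹ • ∑ s : Equiv.Perm (Fin N), Measure.map (fun X => X ∘ s) P0
    with hPdef
  have hf0 : (N.factorial : ℝ≥0∞) ≠ 0 := by
    simp [Nat.factorial_ne_zero]
  have hftop : (N.factorial : ℝ≥0∞) ≠ ⊤ := ENNReal.natCast_ne_top _
  haveI hπprob : ∀ s : Equiv.Perm (Fin N),
      IsProbabilityMeasure (Measure.map (fun X : Fin N → (EuclideanSpace ℝ (Fin d)) => X ∘ s) P0) :=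
    fun s => Measure.isProbabilityMeasure_map (hcompmeas s).aemeasurable
  refine ⟨P, ?_, ?_, ?_, ?_⟩
  · constructor
    rw [hPdef, Measure.smul_apply, Measure.finset_sum_apply]
    rw [Finset.sum_congr rfl (fun s _ => (hπprob s).measure_univ)]
    rw [Finset.sum_const, Finset.card_univ, Fintype.card_perm, Fintype.card_fin]
    rw [nsmul_eq_mul, mul_one, smul_eq_mul, ENNReal.inv_mul_cancel hf0 hftop]
  · intro σ
    rw [hPdef, Measure.map_smul, map_finset_sum' (hcompmeas σ)]
    congr 1
    have hstep : ∀ s : Equiv.Perm (Fin N),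
        Measure.map (fun X : Fin N → (EuclideanSpace ℝ (Fin d)) => X ∘ σ) (Measure.map (fun X => X ∘ s) P0) =
          Measure.map (fun X => X ∘ ⇑(s * σ)) P0 := by
      intro s
      rw [Measure.map_map (hcompmeas σ) (hcompmeas s)]
      congr 1
    rw [Finset.sum_congr rfl (fun s _ => hstep s)]
    exact Fintype.sum_equiv (Equiv.mulRight σ)
      (fun s => Measure.map (fun X => X ∘ ⇑(s * σ)) P0)
      (fun s => Measure.map (fun X => X ∘ ⇑s) P0) (fun s => rfl)
  · intro i
    rw [hPdef, Measure.map_smul, map_finset_sum' (measurable_pi_apply i)]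
    have hterm : ∀ s : Equiv.Perm (Fin N),
        Measure.map (fun X : Fin N → (EuclideanSpace ℝ (Fin d)) => X i) (Measure.map (fun X => X ∘ s) P0) = ρ := by
      intro s
      rw [Measure.map_map (measurable_pi_apply i) (hcompmeas s)]
      exact hmarg (s i)
    rw [Finset.sum_congr rfl (fun s _ => hterm s)]
    rw [Finset.sum_const, Finset.card_univ, Fintype.card_perm, Fintype.card_fin]
    rw [← Nat.cast_smul_eq_nsmul ℝ≥0∞, smul_smul, ENNReal.inv_mul_cancel hf0 hftop, one_smul,
      hρdef]
  · have hpre : ∀ s : Equiv.Perm (Fin N), (fun X : Fin N → (EuclideanSpace ℝ (Fin d)) => X ∘ s) ⁻¹' D = D := by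
      intro s
      ext X
      simp only [Set.mem_preimage, hDdef, Set.mem_setOf_eq, Function.comp]
      constructor
      · rintro ⟨i, j, hij, h⟩
        exact ⟨s i, s j, fun h' => hij (s.injective h'), h⟩
      · rintro ⟨i, j, hij, h⟩
        refine ⟨s.symm i, s.symm j, fun h' => hij ?_, ?_⟩
        · rw [← s.apply_symm_apply i, ← s.apply_symm_apply j, h']
        · simpa [s.apply_symm_apply] using h
    show P D = 0
    rw [hPdef, Measure.smul_apply, Measure.finset_sum_apply]
    have hterm : ∀ s ∈ (Finset.univ : Finset (Equiv.Perm (Fin N))),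
        Measure.map (fun X : Fin N → (EuclideanSpace ℝ (Fin d)) => X ∘ s) P0 D = 0 := by
      intro s _
      rw [Measure.map_apply (hcompmeas s) hD, hpre s, hP0D]
    rw [Finset.sum_congr rfl hterm, Finset.sum_const]
    simp
end

section
/- Let $N \geq 2$ and let $\rho$ be a non-atomic probability measure on $\mathbb{R}^d$. Let $c(x_1,\dotsc,x_N) = \sum_{1 \leq i < j \leq N} \frac{1}{\omega(|x_i - x_j|)}$ where $\omega:[0,\infty)\to[0,\infty)$ is continuous, strictly increasing with $\omega(0) = 0$. Then there exists a probability measure $P$ on $(\mathbb{R}^d)^N$ with all marginals equal to $\rho$ and $\int c \, dP < \infty$. -/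
open MeasureTheory Set
open scoped ENNReal RealInnerProductSpace

theorem my_pi_map_eval {ι : Type*} [Fintype ι] {α : ι → Type*} [∀ i, MeasurableSpace (α i)]
    (ν : ∀ i, Measure (α i)) [∀ i, IsProbabilityMeasure (ν i)] (i : ι) :
    (Measure.pi ν).map (Function.eval i) = ν i := by
  classical
  ext s hs
  rw [Measure.map_apply (measurable_pi_apply i) hs, Set.eval_preimage, Measure.pi_pi]
  rw [Fintype.prod_eq_single i (fun j hj => by simp [Function.update_of_ne hj])]
  simp

theorem my_map_finset_sum {α β ι : Type*} [MeasurableSpace α] [MeasurableSpace β]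
    (s : Finset ι) (μ : ι → Measure α) {f : α → β} (hf : Measurable f) :
    (∑ i ∈ s, μ i).map f = ∑ i ∈ s, (μ i).map f := by
  classical
  induction s using Finset.induction with
  | empty => simp
  | insert _ _ h ih => rw [Finset.sum_insert h, Finset.sum_insert h, Measure.map_add _ _ hf, ih]

open Fin.NatCast in
theorem my_sum_mod {β : Type*} [AddCommMonoid β] (n : ℕ) (hn : 0 < n) (c : ℕ) (F : ℕ → β) :
    ∑ τ ∈ Finset.range n, F ((c + τ) % n) = ∑ k ∈ Finset.range n, F k := by
  haveI : NeZero n := ⟨hn.ne'⟩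
  rw [← Fin.sum_univ_eq_sum_range (fun k => F k) n,
    ← Fin.sum_univ_eq_sum_range (fun τ => F ((c + τ) % n)) n]
  have h1 : ∀ τ : Fin n, F ((c + τ.1) % n) = F (((c : Fin n) + τ).1) := by
    intro τ
    congr 1
    rw [Fin.add_def]
    simp [Fin.val_natCast, Nat.mod_add_mod]
  rw [Fintype.sum_congr _ _ h1]
  exact Equiv.sum_comp (Equiv.addLeft (c : Fin n)) (fun z => F z.1)

theorem my_cdf_continuous (μ : Measure ℝ) [IsProbabilityMeasure μ] [NullSingletonClass μ] :
    Continuous (ProbabilityTheory.cdf μ) := by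
  rw [continuous_iff_continuousAt]
  intro x
  have hm : Monotone (ProbabilityTheory.cdf μ) := ProbabilityTheory.monotone_cdf μ
  rw [continuousAt_iff_continuous_left'_right']
  refine ⟨?_, ((ProbabilityTheory.cdf μ).right_continuous x).mono Ioi_subset_Ici_self⟩
  rw [hm.continuousWithinAt_Iio_iff_leftLim_eq]
  have h1 : (ProbabilityTheory.cdf μ).measure {x} = 0 := by
    rw [ProbabilityTheory.measure_cdf]; exact measure_singleton x
  rw [StieltjesFunction.measure_singleton, ENNReal.ofReal_eq_zero] at h1
  have h2 := hm.leftLim_le (le_refl x)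
  linarith

theorem my_partition (μ : Measure ℝ) [IsProbabilityMeasure μ] [NullSingletonClass μ]
    (n : ℕ) (hn : 3 ≤ n) :
    ∃ (B : ℕ → Set ℝ) (g : ℝ), 0 < g ∧ (∀ k, MeasurableSet (B k)) ∧
      (∀ k l, k < l → l < n → Disjoint (B k) (B l)) ∧
      (∀ t : ℝ, ∃ k < n, t ∈ B k) ∧
      (∀ k, k < n → μ (B k) = (n : ℝ≥0∞)⁻¹) ∧
      (∀ a b, a + 2 ≤ b → b < n → ∀ x ∈ B a, ∀ y ∈ B b, g ≤ y - x) := by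
  classical
  set F : ℝ → ℝ := fun t => ProbabilityTheory.cdf μ t with hF
  have hFc : Continuous F := my_cdf_continuous μ
  have hm : Monotone F := ProbabilityTheory.monotone_cdf μ
  have npos : (0:ℝ) < n := by exact_mod_cast Nat.lt_of_lt_of_le (by norm_num) hn
  -- IVT
  have hIVT : ∀ v : ℝ, 0 < v → v < 1 → ∃ t, F t = v := by
    intro v hv0 hv1
    obtain ⟨a, ha⟩ : ∃ a, F a < v := by
      have := (ProbabilityTheory.tendsto_cdf_atBot μ).eventually_lt_const hv0
      exact this.exists
    obtain ⟨b, hb⟩ : ∃ b, v < F b := by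
      have := (ProbabilityTheory.tendsto_cdf_atTop μ).eventually_const_lt hv1
      exact this.exists
    have hab : a ≤ b := by
      by_contra h
      exact absurd (hm (le_of_not_ge h)) (by linarith)
    obtain ⟨t, _, ht⟩ := intermediate_value_Icc hab hFc.continuousOn ⟨ha.le, hb.le⟩
    exact ⟨t, ht⟩
  have hsex : ∀ k : ℕ, 1 ≤ k → k < n → ∃ t, F t = k / n := by
    intro k h1 h2
    refine hIVT _ (by positivity) ((div_lt_one npos).2 (by exact_mod_cast h2))
  set s : ℕ → ℝ := fun k => if h : 1 ≤ k ∧ k < n then (hsex k h.1 h.2).choose else 0 with hs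
  have hFs : ∀ k, 1 ≤ k → k < n → F (s k) = k / n := by
    intro k h1 h2
    simp only [hs, dif_pos (And.intro h1 h2)]
    exact (hsex k h1 h2).choose_spec
  have hslt : ∀ j k, 1 ≤ j → j < k → k < n → s j < s k := by
    intro j k h1 hjk hkn
    by_contra h
    have := hm (le_of_not_gt h)
    rw [hFs j h1 (lt_trans hjk hkn), hFs k (le_trans h1 hjk.le) hkn] at this
    have : (k:ℝ) ≤ j := by
      have := (div_le_div_iff_of_pos_right npos).1 this
      exact this
    exact absurd (by exact_mod_cast this) (not_le.2 hjk)
  have hsle : ∀ j k, 1 ≤ j → j ≤ k → k < n → s j ≤ s k := by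
    intro j k h1 hjk hkn
    rcases eq_or_lt_of_le hjk with h | h
    · rw [h]
    · exact (hslt j k h1 h hkn).le
  -- the slabs
  set B : ℕ → Set ℝ := fun k => {t | (k = 0 ∨ s k < t) ∧ (t ≤ s (k + 1) ∨ k = n - 1)} with hB
  have hBmeas : ∀ k, MeasurableSet (B k) := by
    intro k
    have : B k = {t | k = 0 ∨ s k < t} ∩ {t | t ≤ s (k + 1) ∨ k = n - 1} := rfl
    rw [this]
    refine MeasurableSet.inter ?_ ?_
    · by_cases h0 : k = 0
      · simp [h0]
      · have : {t : ℝ | k = 0 ∨ s k < t} = Ioi (s k) := by ext t; simp [h0]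
        rw [this]; exact measurableSet_Ioi
    · by_cases h1 : k = n - 1
      · simp [h1]
      · have : {t : ℝ | t ≤ s (k + 1) ∨ k = n - 1} = Iic (s (k+1)) := by ext t; simp [h1]
        rw [this]; exact measurableSet_Iic
  -- disjointness
  have hdisj : ∀ k l, k < l → l < n → Disjoint (B k) (B l) := by
    intro k l hkl hln
    rw [Set.disjoint_left]
    rintro t ⟨_, htk2⟩ ⟨htl1, _⟩
    have hl1 : s l < t := htl1.resolve_left (by omega)
    have hk2 : t ≤ s (k + 1) := htk2.resolve_right (by omega)
    have : s (k + 1) ≤ s l := hsle (k+1) l (by omega) (by omega) hln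
    linarith
  -- cover
  have hcover : ∀ t : ℝ, ∃ k < n, t ∈ B k := by
    intro t
    set K := (Finset.range n).filter (fun j => j = 0 ∨ s j < t) with hK
    have h0K : (0:ℕ) ∈ K := by
      simp [hK, Finset.mem_filter]
      omega
    set k := K.max' ⟨0, h0K⟩ with hk
    have hkK : k ∈ K := K.max'_mem _
    rw [hK, Finset.mem_filter, Finset.mem_range] at hkK
    refine ⟨k, hkK.1, hkK.2, ?_⟩
    by_cases hlast : k = n - 1
    · exact Or.inr hlast
    · left
      by_contra h
      have hk1K : k + 1 ∈ K := by
        rw [hK, Finset.mem_filter, Finset.mem_range]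
        exact ⟨by omega, Or.inr (lt_of_not_ge h)⟩
      have := K.le_max' _ hk1K
      omega
  -- masses
  have hIic : ∀ k, 1 ≤ k → k < n → μ (Iic (s k)) = ENNReal.ofReal (k / n) := by
    intro k h1 h2
    rw [← ProbabilityTheory.ofReal_cdf μ (s k)]
    have := hFs k h1 h2
    rw [hF] at this
    simp only at this
    rw [this]
  have hmass : ∀ k, k < n → μ (B k) = (n : ℝ≥0∞)⁻¹ := by
    have hone : ENNReal.ofReal (1 / (n:ℝ)) = (n : ℝ≥0∞)⁻¹ := by
      rw [one_div, ENNReal.ofReal_inv_of_pos npos, ENNReal.ofReal_natCast]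
    intro k hkn
    rcases Nat.eq_zero_or_pos k with h0 | hpos
    · have : B k = Iic (s 1) := by
        ext t; simp [hB, h0]
        intro h; omega
      rw [this, hIic 1 le_rfl (by omega), ← hone]
      norm_num
    · by_cases hlast : k = n - 1
      · have : B k = Ioi (s k) := by
          ext t; simp [hB, hlast]
          omega
        rw [this, ← Set.compl_Iic, measure_compl measurableSet_Iic (measure_ne_top _ _),
          measure_univ, hIic k hpos hkn]
        rw [← ENNReal.ofReal_one, ← ENNReal.ofReal_sub _ (by positivity), ← hone]
        congr 1
        have hcast : ((k:ℝ)) = (n:ℝ) - 1 := by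
          have h1 : (k:ℝ) = ((n - 1 : ℕ) : ℝ) := by rw [hlast]
          rw [h1, Nat.cast_sub (by omega)]
          norm_num
        rw [hcast]
        field_simp
        ring
      · have hk1 : k + 1 < n := by omega
        have : B k = Ioc (s k) (s (k + 1)) := by
          ext t; simp [hB, Set.mem_Ioc]
          constructor
          · rintro ⟨h1, h2⟩
            exact ⟨h1.resolve_left (by omega), h2.resolve_right (by omega)⟩
          · rintro ⟨h1, h2⟩
            exact ⟨Or.inr h1, Or.inl h2⟩
        rw [this, ← Iic_sdiff_Iic,
          measure_diff (Iic_subset_Iic.2 ((hslt k (k+1) hpos (by omega) hk1).le))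
            measurableSet_Iic.nullMeasurableSet (measure_ne_top _ _),
          hIic k hpos hkn, hIic (k+1) (by omega) hk1,
          ← ENNReal.ofReal_sub _ (by positivity), ← hone]
        congr 1
        push_cast
        field_simp
        ring
  -- the gap
  have hne : (Finset.Icc 1 (n-2)).Nonempty := ⟨1, by simp; omega⟩
  set G := (Finset.Icc 1 (n-2)).image (fun k => s (k + 1) - s k) with hG
  have hGne : G.Nonempty := hne.image _
  set g := G.min' hGne with hg
  have hgpos : 0 < g := by
    obtain ⟨k, hk, hkg⟩ := Finset.mem_image.1 (G.min'_mem hGne)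
    rw [Finset.mem_Icc] at hk
    rw [hg] at *
    rw [← hkg]
    have := hslt k (k+1) hk.1 (by omega) (by omega)
    linarith
  refine ⟨B, g, hgpos, hBmeas, hdisj, hcover, hmass, ?_⟩
  rintro a b hab hbn x ⟨_, hx2⟩ y ⟨hy1, _⟩
  have hsb : s b < y := hy1.resolve_left (by omega)
  have hxa : x ≤ s (a + 1) := hx2.resolve_right (by omega)
  have h1 : g ≤ s (a + 2) - s (a + 1) := by
    refine G.min'_le _ (Finset.mem_image.2 ⟨a + 1, ?_, rfl⟩)
    rw [Finset.mem_Icc]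
    omega
  have h2 : s (a + 2) ≤ s b := hsle (a+2) b (by omega) hab hbn
  linarith

theorem my_direction {d : ℕ} (hd : 1 ≤ d) (ρ : Measure (EuclideanSpace ℝ (Fin d)))
    [IsProbabilityMeasure ρ] [NullSingletonClass ρ] :
    ∃ e : EuclideanSpace ℝ (Fin d), ‖e‖ = 1 ∧
      NullSingletonClass (ρ.map (fun x => ⟪e, x⟫)) := by
  classical
  set E := EuclideanSpace ℝ (Fin d) with hE
  have : NeZero d := ⟨by omega⟩
  have hnt : Nontrivial E := by
    have h1 : ‖EuclideanSpace.single (⟨0, by omega⟩ : Fin d) (1:ℝ)‖ = 1 := by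
      rw [EuclideanSpace.norm_single]; norm_num
    refine ⟨⟨EuclideanSpace.single (⟨0, by omega⟩ : Fin d) (1:ℝ), 0, fun h => ?_⟩⟩
    rw [h, norm_zero] at h1
    norm_num at h1
  set Z : Set (E × (E × E)) := {p | ⟪p.1, p.2.1 - p.2.2⟫ = 0 ∧ p.2.1 ≠ p.2.2} with hZ
  have hZm : MeasurableSet Z := by
    have h1 : IsClosed {p : E × (E × E) | ⟪p.1, p.2.1 - p.2.2⟫ = 0} :=
      isClosed_eq (continuous_fst.inner ((continuous_fst.comp continuous_snd).sub
        (continuous_snd.comp continuous_snd))) continuous_const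
    have h2 : IsClosed {p : E × (E × E) | p.2.1 = p.2.2} :=
      isClosed_eq (continuous_fst.comp continuous_snd) (continuous_snd.comp continuous_snd)
    exact h1.measurableSet.inter h2.measurableSet.compl
  have hvol0 : (volume.prod (ρ.prod ρ)) Z = 0 := by
    rw [Measure.prod_apply_symm hZm]
    have hz : ∀ y : E × E, volume ((fun x => (x, y)) ⁻¹' Z) = 0 := by
      intro y
      by_cases hy : y.1 = y.2
      · have : ((fun x => (x, y)) ⁻¹' Z) = ∅ := by
          ext u; simp [hZ, hy]
        simp [this]
      · have hsub : ((fun x => (x, y)) ⁻¹' Z) ⊆ ((ℝ ∙ (y.1 - y.2))ᗮ : Submodule ℝ E) := by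
          intro u hu
          rw [SetLike.mem_coe, Submodule.mem_orthogonal_singleton_iff_inner_right,
            real_inner_comm]
          exact hu.1
        refine measure_mono_null hsub (Measure.addHaar_submodule _ _ ?_)
        intro htop
        have hmem : y.1 - y.2 ∈ (ℝ ∙ (y.1 - y.2))ᗮ := htop ▸ Submodule.mem_top
        rw [Submodule.mem_orthogonal_singleton_iff_inner_right] at hmem
        exact hy (sub_eq_zero.1 (inner_self_eq_zero.1 hmem))
      -- done
    calc ∫⁻ y, volume ((fun x => (x, y)) ⁻¹' Z) ∂(ρ.prod ρ)
        = ∫⁻ _, 0 ∂(ρ.prod ρ) := lintegral_congr hz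
      _ = 0 := lintegral_zero
  have hae : ∀ᵐ u ∂(volume : Measure E), (ρ.prod ρ) (Prod.mk u ⁻¹' Z) = 0 := by
    rw [Measure.prod_apply hZm] at hvol0
    exact (lintegral_eq_zero_iff (measurable_measure_prodMk_left hZm)).1 hvol0
  have hne0 : ∀ᵐ u ∂(volume : Measure E), u ≠ 0 := by
    have h00 : volume ({0} : Set E) = 0 := by
      have := Measure.addHaar_submodule (volume : Measure E) ⊥ bot_ne_top
      simpa using this
    rw [ae_iff]
    have h0 : {u : E | ¬ u ≠ 0} = {0} := by ext u; simp
    rw [h0]; exact h00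
  have hvne : (volume : Measure E) ≠ 0 := by
    intro h
    have : (volume : Measure E) univ ≠ 0 := (isOpen_univ.measure_pos volume univ_nonempty).ne'
    rw [h] at this
    simp at this
  have : (ae (volume : Measure E)).NeBot := ae_neBot.2 hvne
  obtain ⟨u, hu0, huZ⟩ := (hne0.and hae).exists
  set e : E := ‖u‖⁻¹ • u with he
  have hnorm : ‖e‖ = 1 := norm_smul_inv_norm hu0
  refine ⟨e, hnorm, ?_⟩
  have hfc : Continuous (fun x : E => ⟪e, x⟫) := continuous_const.inner continuous_id
  constructor
  intro c
  by_contra hc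
  set P : Set E := (fun x : E => ⟪e, x⟫) ⁻¹' {c} with hP
  have hPm : MeasurableSet P := hfc.measurable (measurableSet_singleton c)
  have hρP : ρ P ≠ 0 := by
    rw [Measure.map_apply hfc.measurable (measurableSet_singleton c)] at hc
    exact hc
  have hdiag : (ρ.prod ρ) {p : E × E | p.1 = p.2} = 0 := by
    rw [Measure.prod_apply (isClosed_eq continuous_fst continuous_snd).measurableSet]
    have : ∀ x : E, ρ {y : E | (x, y) ∈ {p : E × E | p.1 = p.2}} = 0 := by
      intro x
      have : {y : E | (x, y) ∈ {p : E × E | p.1 = p.2}} = {x} := by ext y; simp [eq_comm]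
      rw [this]; exact measure_singleton x
    calc ∫⁻ x, ρ {y : E | (x, y) ∈ {p : E × E | p.1 = p.2}} ∂ρ
        = ∫⁻ _, 0 ∂ρ := lintegral_congr this
      _ = 0 := lintegral_zero
  have hsub : (P ×ˢ P) ∩ {p : E × E | p.1 = p.2}ᶜ ⊆ Prod.mk u ⁻¹' Z := by
    rintro ⟨a, b⟩ ⟨⟨ha, hb⟩, hab⟩
    simp only [hP, mem_preimage, mem_singleton_iff] at ha hb
    refine ⟨?_, hab⟩
    have hu : u = ‖u‖ • e := by
      rw [he, smul_smul, mul_inv_cancel₀ (norm_ne_zero_iff.2 hu0), one_smul]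
    show ⟪u, a - b⟫ = 0
    rw [hu, real_inner_smul_left, inner_sub_right, ha, hb]
    ring
  have hbound : ρ P * ρ P ≤ 0 := by
    calc ρ P * ρ P = (ρ.prod ρ) (P ×ˢ P) := (Measure.prod_prod _ _).symm
      _ ≤ (ρ.prod ρ) ((P ×ˢ P ∩ {p : E × E | p.1 = p.2}ᶜ) ∪ {p : E × E | p.1 = p.2}) := by
          refine measure_mono ?_
          intro p hp
          by_cases hpd : p.1 = p.2
          · exact Or.inr hpd
          · exact Or.inl ⟨hp, hpd⟩
      _ ≤ (ρ.prod ρ) (P ×ˢ P ∩ {p : E × E | p.1 = p.2}ᶜ) + (ρ.prod ρ) {p : E × E | p.1 = p.2} :=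
          measure_union_le _ _
      _ ≤ (ρ.prod ρ) (Prod.mk u ⁻¹' Z) + 0 := by
          rw [hdiag]
          exact add_le_add (measure_mono hsub) le_rfl
      _ = 0 := by rw [huZ, add_zero]
  exact hρP (by simpa using (mul_self_eq_zero (a := ρ P)).1 (le_antisymm hbound zero_le))

theorem exists_finite_cost_plan_nonatomic
    {d N : ℕ} (hN : 2 ≤ N)
    (ρ : Measure (EuclideanSpace ℝ (Fin d))) [IsProbabilityMeasure ρ] [NullSingletonClass ρ]
    (ω : ℝ → ℝ)
    (hω_cont : ContinuousOn ω (Set.Ici 0))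
    (hω_mono : StrictMonoOn ω (Set.Ici 0))
    (hω0 : ω 0 = 0) :
    ∃ P : Measure (Fin N → EuclideanSpace ℝ (Fin d)),
      IsProbabilityMeasure P ∧
      (∀ i : Fin N, Measure.map (fun X => X i) P = ρ) ∧
      ∫⁻ X, (∑ p ∈ Finset.univ.filter (fun p : Fin N × Fin N => p.1 < p.2),
        (ENNReal.ofReal (ω (dist (X p.1) (X p.2))))⁻¹) ∂P < ⊤ := by
  classical
  rcases Nat.eq_zero_or_pos d with hd0 | hdpos
  · exfalso
    subst hd0
    have h1 : (univ : Set (EuclideanSpace ℝ (Fin 0))) = {0} := by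
      ext x; simp [Subsingleton.elim x 0]
    have h2 := measure_univ (μ := ρ)
    rw [h1, measure_singleton] at h2
    exact zero_ne_one h2
  obtain ⟨e, hnorm, hμna⟩ := my_direction hdpos ρ
  set f : EuclideanSpace ℝ (Fin d) → ℝ := fun x => ⟪e, x⟫ with hf
  have hfc : Continuous f := continuous_const.inner continuous_id
  set μ : Measure ℝ := ρ.map f with hμ
  haveI hμprob : IsProbabilityMeasure μ := Measure.isProbabilityMeasure_map hfc.measurable.aemeasurable
  haveI : NullSingletonClass μ := hμna
  set n := 2 * N with hn
  have hn3 : 3 ≤ n := by omega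
  have hnpos : 0 < n := by omega
  have hnne : (n : ℝ≥0∞) ≠ 0 := by exact_mod_cast hnpos.ne'
  have hntop : (n : ℝ≥0∞) ≠ ⊤ := ENNReal.natCast_ne_top n
  obtain ⟨B, g, hg, hBmeas, hdisj, hcover, hmass, hsep⟩ := my_partition μ n hn3
  set A : ℕ → Set (EuclideanSpace ℝ (Fin d)) := fun k => f ⁻¹' B k with hA
  have hAmeas : ∀ k, MeasurableSet (A k) := fun k => hfc.measurable (hBmeas k)
  have hρA : ∀ k, k < n → ρ (A k) = (n : ℝ≥0∞)⁻¹ := by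
    intro k hk
    rw [hA]
    have := Measure.map_apply hfc.measurable (hBmeas k) (μ := ρ)
    rw [← hμ] at this
    rw [← this]
    exact hmass k hk
  set ν : ℕ → Measure (EuclideanSpace ℝ (Fin d)) :=
    fun k => (n : ℝ≥0∞) • ρ.restrict (A k) with hν
  have hνA : ∀ k, k < n → ν k (A k) = 1 := by
    intro k hk
    rw [hν]
    simp only [Measure.smul_apply, smul_eq_mul, Measure.restrict_apply (hAmeas k), inter_self]
    rw [hρA k hk]
    exact ENNReal.mul_inv_cancel hnne hntop
  have hνprob : ∀ k, k < n → IsProbabilityMeasure (ν k) := by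
    intro k hk
    constructor
    rw [hν]
    simp only [Measure.smul_apply, smul_eq_mul, Measure.restrict_apply MeasurableSet.univ,
      univ_inter]
    rw [hρA k hk]
    exact ENNReal.mul_inv_cancel hnne hntop
  set r : ℕ → Fin N → ℕ := fun τ i => (2 * i.1 + τ) % n with hr
  have hrlt : ∀ τ i, r τ i < n := fun τ i => Nat.mod_lt _ hnpos
  have hprob : ∀ τ, ∀ i : Fin N, IsProbabilityMeasure (ν (r τ i)) :=
    fun τ i => hνprob _ (hrlt τ i)
  -- distinct indices are ≥ 2 apart
  have hrsep : ∀ τ (i j : Fin N), i ≠ j → r τ i + 2 ≤ r τ j ∨ r τ j + 2 ≤ r τ i := by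
    intro τ i j hij
    have hne : r τ i ≠ r τ j := by
      intro h
      have hmod : (2 * i.1 + τ) ≡ (2 * j.1 + τ) [MOD n] := h
      have hmod2 : (2 * i.1) ≡ (2 * j.1) [MOD n] := Nat.ModEq.add_right_cancel' τ hmod
      obtain ⟨k, hk⟩ := hmod2.dvd
      have hk' : 2 * (j.1 : ℤ) - 2 * (i.1 : ℤ) = 2 * ((N : ℤ) * k) := by
        push_cast [hn] at hk ⊢
        linarith
      have hm : (j.1 : ℤ) - (i.1 : ℤ) = (N : ℤ) * k := by linarith
      have hiN : (i.1 : ℤ) < N := by exact_mod_cast i.2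
      have hjN : (j.1 : ℤ) < N := by exact_mod_cast j.2
      have hi0 : (0 : ℤ) ≤ i.1 := by positivity
      have hj0 : (0 : ℤ) ≤ j.1 := by positivity
      have hNpos : (0 : ℤ) < N := by exact_mod_cast (by omega : 0 < N)
      rcases lt_trichotomy k 0 with hk0 | hk0 | hk0
      · have : (N : ℤ) * k ≤ (N : ℤ) * (-1) := by
          apply mul_le_mul_of_nonneg_left (by omega) hNpos.le
        simp at this
        linarith
      · subst hk0
        simp at hm
        exact hij (Fin.ext (by exact_mod_cast (sub_eq_zero.1 hm).symm))
      · have : (N : ℤ) * 1 ≤ (N : ℤ) * k := by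
          apply mul_le_mul_of_nonneg_left (by omega) hNpos.le
        simp at this
        linarith
    have hpar : r τ i % 2 = r τ j % 2 := by
      have h2 : (2:ℕ) ∣ n := ⟨N, hn⟩
      rw [hr]
      simp only
      rw [Nat.mod_mod_of_dvd _ h2, Nat.mod_mod_of_dvd _ h2]
      omega
    omega
  set Ppi : ℕ → Measure (Fin N → EuclideanSpace ℝ (Fin d)) :=
    fun τ => Measure.pi (fun i => ν (r τ i)) with hPpi
  have hPpiprob : ∀ τ, IsProbabilityMeasure (Ppi τ) := by
    intro τ
    haveI := hprob τ
    rw [hPpi]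
    infer_instance
  set P : Measure (Fin N → EuclideanSpace ℝ (Fin d)) :=
    (n : ℝ≥0∞)⁻¹ • ∑ τ ∈ Finset.range n, Ppi τ with hP
  have hsum_restrict : ∑ k ∈ Finset.range n, ρ.restrict (A k) = ρ := by
    ext s hs
    rw [Measure.finset_sum_apply]
    simp_rw [Measure.restrict_apply hs]
    rw [← measure_biUnion_finset ?hd (fun k _ => hs.inter (hAmeas k))]
    · congr 1
      ext x
      simp only [mem_iUnion, mem_inter_iff, Finset.mem_range, exists_prop]
      constructor
      · rintro ⟨k, _, hx, _⟩; exact hx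
      · intro hx
        obtain ⟨k, hkn, hk⟩ := hcover (f x)
        exact ⟨k, hkn, hx, hk⟩
    case hd =>
      intro k hk l hl hkl
      have hdAB : Disjoint (A k) (A l) := by
        rcases lt_or_gt_of_ne hkl with h | h
        · exact (hdisj k l h (Finset.mem_range.1 hl)).preimage f
        · exact ((hdisj l k h (Finset.mem_range.1 hk)).preimage f).symm
      exact (hdAB.mono inter_subset_right inter_subset_right)
  refine ⟨P, ?_, ?_, ?_⟩
  · constructor
    rw [hP]
    simp only [Measure.smul_apply, smul_eq_mul, Measure.finset_sum_apply]
    have : ∀ τ ∈ Finset.range n, Ppi τ univ = 1 := by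
      intro τ _
      haveI := hPpiprob τ
      exact measure_univ
    rw [Finset.sum_congr rfl this, Finset.sum_const, Finset.card_range, nsmul_eq_mul, mul_one]
    exact ENNReal.inv_mul_cancel hnne hntop
  · intro i
    have hmapτ : ∀ τ ∈ Finset.range n, (Ppi τ).map (fun X => X i) = ν (r τ i) := by
      intro τ _
      haveI := hprob τ
      exact my_pi_map_eval (fun i => ν (r τ i)) i
    rw [hP, Measure.map_smul, my_map_finset_sum _ _ (measurable_pi_apply i),
      Finset.sum_congr rfl hmapτ]
    have hre : ∑ τ ∈ Finset.range n, ν (r τ i) = ∑ k ∈ Finset.range n, ν k := by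
      rw [hr]
      exact my_sum_mod n hnpos (2 * i.1) ν
    rw [hre]
    have : ∑ k ∈ Finset.range n, ν k
        = (n : ℝ≥0∞) • ∑ k ∈ Finset.range n, ρ.restrict (A k) := by
      rw [Finset.smul_sum]
    rw [this, hsum_restrict, smul_smul, ENNReal.inv_mul_cancel hnne hntop, one_smul]
  · -- finite cost
    set C : ℝ≥0∞ := (ENNReal.ofReal (ω g))⁻¹ with hC
    have hωg : 0 < ω g := by
      rw [← hω0]
      exact hω_mono (mem_Ici.2 le_rfl) (mem_Ici.2 hg.le) hg
    have hCtop : C ≠ ⊤ := ENNReal.inv_ne_top.2 (ENNReal.ofReal_pos.2 hωg).ne'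
    set pairs := Finset.univ.filter (fun p : Fin N × Fin N => p.1 < p.2) with hpairs
    set Bc : ℝ≥0∞ := (pairs.card : ℝ≥0∞) * C with hBc
    have hBctop : Bc < ⊤ := ENNReal.mul_lt_top (ENNReal.natCast_lt_top _) hCtop.lt_top
    have hbound : ∀ τ ∈ Finset.range n,
        ∫⁻ X, (∑ p ∈ pairs, (ENNReal.ofReal (ω (dist (X p.1) (X p.2))))⁻¹) ∂(Ppi τ) ≤ Bc := by
      intro τ _
      haveI := hprob τ
      haveI := hPpiprob τ
      set S : Set (Fin N → EuclideanSpace ℝ (Fin d)) := univ.pi (fun i => A (r τ i)) with hS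
      have hSm : MeasurableSet S := MeasurableSet.univ_pi (fun i => hAmeas _)
      have hS1 : Ppi τ S = 1 := by
        rw [hPpi, hS, Measure.pi_pi]
        rw [Finset.prod_congr rfl (fun i _ => hνA (r τ i) (hrlt τ i))]
        simp
      have haeS : ∀ᵐ X ∂(Ppi τ), X ∈ S := by
        rw [ae_iff]
        have : {X | ¬ X ∈ S} = Sᶜ := rfl
        rw [this, measure_compl hSm (measure_ne_top _ _), hS1, measure_univ, tsub_self]
      have hpt : ∀ X ∈ S, (∑ p ∈ pairs, (ENNReal.ofReal (ω (dist (X p.1) (X p.2))))⁻¹) ≤ Bc := by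
        intro X hX
        have hXA : ∀ i : Fin N, f (X i) ∈ B (r τ i) := by
          intro i
          exact hX i (mem_univ i)
        have hterm : ∀ p ∈ pairs, (ENNReal.ofReal (ω (dist (X p.1) (X p.2))))⁻¹ ≤ C := by
          intro p hp
          have hplt : p.1 < p.2 := (Finset.mem_filter.1 hp).2
          have hgdist : g ≤ dist (X p.1) (X p.2) := by
            have habs : g ≤ |f (X p.1) - f (X p.2)| := by
              rcases hrsep τ p.1 p.2 hplt.ne with hc | hc
              · have := hsep _ _ hc (hrlt τ p.2) (f (X p.1)) (hXA p.1) (f (X p.2)) (hXA p.2)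
                rw [abs_sub_comm]
                exact le_trans this (le_abs_self _)
              · have := hsep _ _ hc (hrlt τ p.1) (f (X p.2)) (hXA p.2) (f (X p.1)) (hXA p.1)
                exact le_trans this (le_abs_self _)
            refine le_trans habs ?_
            have h1 : f (X p.1) - f (X p.2) = ⟪e, X p.1 - X p.2⟫ := by
              rw [hf]; simp [inner_sub_right]
            rw [h1]
            calc |⟪e, X p.1 - X p.2⟫| ≤ ‖e‖ * ‖X p.1 - X p.2‖ := abs_real_inner_le_norm _ _
              _ = dist (X p.1) (X p.2) := by rw [hnorm, one_mul, dist_eq_norm]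
          have hωle : ω g ≤ ω (dist (X p.1) (X p.2)) :=
            hω_mono.monotoneOn (mem_Ici.2 hg.le)
              (mem_Ici.2 (le_trans hg.le hgdist)) hgdist
          exact ENNReal.inv_le_inv' (ENNReal.ofReal_le_ofReal hωle)
        calc ∑ p ∈ pairs, (ENNReal.ofReal (ω (dist (X p.1) (X p.2))))⁻¹
            ≤ ∑ _p ∈ pairs, C := Finset.sum_le_sum hterm
          _ = Bc := by rw [Finset.sum_const, nsmul_eq_mul, hBc]
      calc ∫⁻ X, (∑ p ∈ pairs, (ENNReal.ofReal (ω (dist (X p.1) (X p.2))))⁻¹) ∂(Ppi τ)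
          ≤ ∫⁻ _X, Bc ∂(Ppi τ) := lintegral_mono_ae (haeS.mono (fun X hX => hpt X hX))
        _ = Bc := by rw [lintegral_const, measure_univ, mul_one]
    rw [hP, lintegral_smul_measure, lintegral_finset_sum_measure]
    refine ENNReal.mul_lt_top ?_ ?_
    · exact (ENNReal.inv_le_one.2 (by exact_mod_cast Nat.one_le_iff_ne_zero.2 hnpos.ne')).trans_lt
        ENNReal.one_lt_top
    · calc ∑ τ ∈ Finset.range n,
            ∫⁻ X, (∑ p ∈ pairs, (ENNReal.ofReal (ω (dist (X p.1) (X p.2))))⁻¹) ∂(Ppi τ)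
          ≤ ∑ _τ ∈ Finset.range n, Bc := Finset.sum_le_sum hbound
        _ = n * Bc := by rw [Finset.sum_const, Finset.card_range, nsmul_eq_mul]
        _ < ⊤ := ENNReal.mul_lt_top (ENNReal.natCast_lt_top _) hBctop
end

section
/- Let $x_2, \dotsc, x_{N+1}$ be distinct points of $\mathbb{R}^d$ and suppose countably many further points $x_i$ ($i \geq N+2$) are given. Then there exists a partition $\mathbb{R}^d = E_2 \sqcup \dotsb \sqcup E_{N+1}$ into Borel sets such that for each $j = 2, \dotsc, N+1$, $x_j$ lies in the interior of $E_j$, and no point $x_i$ ($i \geq 2$) lies on the boundary $\partial E_j$ of any $E_j$. -/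
theorem exists_partition_separating_atoms
    {d N : ℕ} (hN : 1 ≤ N) (x : ℕ → EuclideanSpace ℝ (Fin d))
    (hx : ∀ i ∈ Set.Icc 2 (N + 1), ∀ j ∈ Set.Icc 2 (N + 1), i ≠ j → x i ≠ x j) :
    ∃ E : Fin N → Set (EuclideanSpace ℝ (Fin d)),
      (∀ j, MeasurableSet (E j)) ∧
      Pairwise (fun i j => Disjoint (E i) (E j)) ∧
      (⋃ j, E j) = Set.univ ∧
      (∀ j : Fin N, x (j.val + 2) ∈ interior (E j)) ∧
      (∀ i : ℕ, 2 ≤ i → ∀ j : Fin N, x i ∉ frontier (E j)) := by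
  haveI : NeZero N := ⟨by omega⟩
  set c : Fin N → EuclideanSpace ℝ (Fin d) := fun j => x (j.val + 2) with hc_def
  have hc : ∀ i j : Fin N, i ≠ j → c i ≠ c j := by
    intro i j hij
    have hi := i.isLt
    have hj := j.isLt
    apply hx (i.val + 2) (by simp [Set.mem_Icc]) (j.val + 2)
      (by simp [Set.mem_Icc])
    intro h
    exact hij (Fin.ext (by omega))
  -- choose δ > 0 with 2δ < dist between distinct centers
  obtain ⟨δ, hδ0, hδ⟩ : ∃ δ > 0, ∀ i j : Fin N, i ≠ j → 2 * δ < dist (c i) (c j) := by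
    classical
    set f : Fin N × Fin N → ℝ := fun p => if p.1 = p.2 then 1 else dist (c p.1) (c p.2) with hf
    have hne : (Finset.univ : Finset (Fin N × Fin N)).Nonempty := Finset.univ_nonempty
    set m := Finset.univ.inf' hne f with hm
    have hmpos : 0 < m := by
      rw [hm, Finset.lt_inf'_iff]
      rintro ⟨i, j⟩ _
      by_cases h : i = j
      · simp [hf, h]
      · simp [hf, h, dist_pos.mpr (hc i j h)]
    refine ⟨m / 3, by linarith, fun i j hij => ?_⟩
    have : m ≤ f (i, j) := Finset.inf'_le _ (Finset.mem_univ _)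
    simp only [hf, if_neg (by exact fun h => hij h : ¬ i = j)] at this
    linarith
  -- choose r ∈ (0, δ) avoiding all distances dist (x i) (c j)
  set S : Set ℝ := Set.range (fun p : ℕ × Fin N => dist (x p.1) (c p.2)) with hS
  have hScount : S.Countable := Set.countable_range _
  have hnsub : ¬ (Set.Ioo (0:ℝ) δ ⊆ S) := by
    intro h
    have h1 : (Set.Ioo (0:ℝ) δ).Countable := hScount.mono h
    have h2 := h1.measure_zero MeasureTheory.volume
    rw [Real.volume_Ioo] at h2
    simp at h2
    linarith
  obtain ⟨r, hrIoo, hrS⟩ := Set.not_subset.mp hnsub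
  obtain ⟨hr0, hrδ⟩ := hrIoo
  have hrne : ∀ (i : ℕ) (j : Fin N), dist (x i) (c j) ≠ r := by
    intro i j h
    exact hrS ⟨(i, j), h⟩
  classical
  set U : Set (EuclideanSpace ℝ (Fin d)) :=
    ⋃ k : Fin N, if k.val + 1 < N then Metric.ball (c k) r else ∅ with hU
  have hUopen : IsOpen U := isOpen_iUnion fun k => by
    by_cases h : k.val + 1 < N <;> simp [h, Metric.isOpen_ball]
  have hCB : IsClosed (⋃ k : Fin N, if k.val + 1 < N then Metric.closedBall (c k) r else ∅) :=
    isClosed_iUnion_of_finite fun k => by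
      by_cases h : k.val + 1 < N <;> simp [h, Metric.isClosed_closedBall]
  have hUclosure : closure U ⊆ ⋃ k : Fin N,
      if k.val + 1 < N then Metric.closedBall (c k) r else ∅ := by
    apply closure_minimal _ hCB
    apply Set.iUnion_mono
    intro k
    by_cases h : k.val + 1 < N <;>
      simp [h, Metric.ball_subset_closedBall]
  have hmemU : ∀ y, y ∈ closure U →
      ∃ k : Fin N, k.val + 1 < N ∧ y ∈ Metric.closedBall (c k) r := by
    intro y hy
    obtain ⟨s, ⟨k, rfl⟩, hys⟩ := hUclosure hy
    by_cases h : k.val + 1 < N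
    · exact ⟨k, h, by simpa [h] using hys⟩
    · simp [h] at hys
  set E : Fin N → Set (EuclideanSpace ℝ (Fin d)) :=
    fun j => if j.val + 1 < N then Metric.ball (c j) r else Uᶜ with hE
  have hball_sub_U : ∀ j : Fin N, j.val + 1 < N → Metric.ball (c j) r ⊆ U := by
    intro j hj
    exact Set.subset_iUnion_of_subset j (by simp [hj])
  have hball_disj : ∀ i j : Fin N, i ≠ j →
      Disjoint (Metric.ball (c i) r) (Metric.ball (c j) r) := by
    intro i j hij
    apply Metric.ball_disjoint_ball
    have := hδ i j hij
    linarith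
  refine ⟨E, ?_, ?_, ?_, ?_, ?_⟩
  · intro j
    by_cases h : j.val + 1 < N
    · simp only [hE, if_pos h]; exact Metric.isOpen_ball.measurableSet
    · simp only [hE, if_neg h]; exact hUopen.measurableSet.compl
  · intro i j hij
    by_cases hi : i.val + 1 < N <;> by_cases hj : j.val + 1 < N
    · simp only [hE, if_pos hi, if_pos hj]; exact hball_disj i j hij
    · simp only [hE, if_pos hi, if_neg hj]
      exact (Set.disjoint_compl_right_iff_subset.mpr (hball_sub_U i hi)).symm.symm
    · simp only [hE, if_neg hi, if_pos hj]
      exact (Set.disjoint_compl_right_iff_subset.mpr (hball_sub_U j hj)).symm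
    · exact absurd (Fin.ext (by omega)) hij
  · ext y
    simp only [Set.mem_iUnion, Set.mem_univ, iff_true]
    by_cases hy : y ∈ U
    · obtain ⟨s, ⟨k, rfl⟩, hys⟩ := hy
      by_cases h : k.val + 1 < N
      · exact ⟨k, by simp [hE, h]; simpa [h] using hys⟩
      · simp [h] at hys
    · refine ⟨⟨N - 1, by omega⟩, ?_⟩
      simp only [hE, if_neg (by simp; omega : ¬ (N - 1 + 1 < N))]
      exact hy
  · intro j
    by_cases h : j.val + 1 < N
    · simp only [hE, if_pos h, Metric.isOpen_ball.interior_eq]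
      exact Metric.mem_ball_self hr0
    · simp only [hE, if_neg h, interior_compl]
      intro hmem
      obtain ⟨k, hk, hball⟩ := hmemU _ hmem
      have hkj : k ≠ j := fun hkj => by omega
      have := hδ k j hkj
      rw [Metric.mem_closedBall, dist_comm] at hball
      linarith
  · intro i hi j
    by_cases h : j.val + 1 < N
    · simp only [hE, if_pos h]
      intro hmem
      have h1 := Metric.frontier_ball_subset_sphere hmem
      exact hrne i j (by simpa [Metric.mem_sphere, dist_eq_norm] using h1)
    · simp only [hE, if_neg h, frontier_compl]
      intro hmem
      rw [frontier, hUopen.interior_eq] at hmem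
      obtain ⟨hmem1, hmem2⟩ := hmem
      obtain ⟨k, hk, hball⟩ := hmemU _ hmem1
      rw [Metric.mem_closedBall] at hball
      have hlt : dist (x i) (c k) < r := lt_of_le_of_ne hball (hrne i k)
      exact hmem2 (hball_sub_U k hk (Metric.mem_ball.mpr hlt))
end

section
/- Let $N \geq 2$, let $c(x_1,\dotsc,x_N) = \sum_{i<j} \omega(|x_i - x_j|)^{-1}$ be a repulsive cost, and define $\rho \in \mathcal{P}(\mathbb{R}^d)$ by $\rho = \frac{1}{N}\delta_0 + \frac{N-1}{N} f \mathcal{L}^d$ where $f(x) = \chi_{B(0,1)}(x)\, \omega'(|x|) / (k |x|^{d-1})$ and $k = \alpha_d \omega(1)$. Then every probability measure $P$ on $(\mathbb{R}^d)^N$ with all marginals equal to $\rho$ satisfies $\int c \, dP = +\infty$. In particular the concentration $\mu(\rho) = 1/N$ is sharp for finiteness of the multimarginal transport cost. -/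
open MeasureTheory Set Metric
open scoped ENNReal

local notation "dim" => Module.finrank ℝ


theorem my_lintegral_fun_norm_addHaar {E : Type*} [NormedAddCommGroup E] [NormedSpace ℝ E]
    [MeasurableSpace E] [BorelSpace E] [Nontrivial E] [FiniteDimensional ℝ E]
    (μ : Measure E) [μ.IsAddHaarMeasure] (F : ℝ → ℝ≥0∞) (hF : Measurable F) :
    ∫⁻ x, F ‖x‖ ∂μ = (dim E) * μ (ball 0 1) *
      ∫⁻ r in Ioi (0:ℝ), ENNReal.ofReal (r ^ (dim E - 1)) * F r := by
  have h0 : μ {(0:E)} = 0 := measure_singleton 0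
  have hmeas1 : Measurable (fun p : sphere (0:E) 1 × Ioi (0:ℝ) => F p.2.1) :=
    hF.comp (measurable_subtype_coe.comp measurable_snd)
  have hmeas2 : Measurable (fun r : Ioi (0:ℝ) => F r.1) := hF.comp measurable_subtype_coe
  calc ∫⁻ x, F ‖x‖ ∂μ = ∫⁻ x in ({0}ᶜ : Set E), F ‖x‖ ∂μ := by
        rw [← lintegral_add_compl (fun x => F ‖x‖) (measurableSet_singleton (0:E)),
          setLIntegral_measure_zero _ _ h0, zero_add]
    _ = ∫⁻ (x : ({0}ᶜ : Set E)), F ‖x.1‖ ∂(μ.comap Subtype.val) :=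
        (lintegral_subtype_comap (measurableSet_singleton (0:E)).compl _).symm
    _ = ∫⁻ p : sphere (0:E) 1 × Ioi (0:ℝ), F p.2.1
          ∂(μ.toSphere.prod (Measure.volumeIoiPow (dim E - 1))) := by
        have := μ.measurePreserving_homeomorphUnitSphereProd.lintegral_comp hmeas1
        simp only [homeomorphUnitSphereProd_apply_snd_coe] at this
        exact this
    _ = ∫⁻ (r : Ioi (0:ℝ)), F r.1
          ∂(Measure.map Prod.snd (μ.toSphere.prod (Measure.volumeIoiPow (dim E - 1)))) :=
        (lintegral_map hmeas2 measurable_snd).symm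
    _ = μ.toSphere univ * ∫⁻ (r : Ioi (0:ℝ)), F r.1 ∂(Measure.volumeIoiPow (dim E - 1)) := by
        rw [Measure.map_snd_prod, lintegral_smul_measure, smul_eq_mul]
    _ = μ.toSphere univ * ∫⁻ (r : Ioi (0:ℝ)),
          (ENNReal.ofReal (r.1 ^ (dim E - 1)) * F r.1) ∂(Measure.comap Subtype.val volume) := by
        rw [Measure.volumeIoiPow, lintegral_withDensity_eq_lintegral_mul _
          (by measurability) hmeas2]
        rfl
    _ = (dim E) * μ (ball 0 1) *
          ∫⁻ r in Ioi (0:ℝ), ENNReal.ofReal (r ^ (dim E - 1)) * F r := by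
        rw [Measure.toSphere_apply_univ,
          lintegral_subtype_comap measurableSet_Ioi
            (fun r : ℝ => ENNReal.ofReal (r ^ (dim E - 1)) * F r)]


theorem deriv_nonneg_of_strictMonoOn (ω : ℝ → ℝ)
    (hω_mono : StrictMonoOn ω (Set.Ici 0))
    {r : ℝ} (hr : 0 < r) (hdiff : DifferentiableAt ℝ ω r) : 0 ≤ deriv ω r := by
  have h1 : Filter.Tendsto (slope ω r) (nhdsWithin r (Set.Ioi r)) (nhds (deriv ω r)) :=
    (hasDerivAt_iff_tendsto_slope.1 hdiff.hasDerivAt).mono_left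
      (nhdsWithin_mono r fun x hx => ne_of_gt hx)
  refine ge_of_tendsto h1 ?_
  filter_upwards [self_mem_nhdsWithin] with x hx
  have hrx : r < x := hx
  have : ω r ≤ ω x :=
    (hω_mono.monotoneOn) (le_of_lt hr) (le_of_lt (hr.trans hrx)) hrx.le
  rw [slope_def_field]
  exact div_nonneg (sub_nonneg.2 this) (sub_nonneg.2 hrx.le)

theorem radial_lintegral_top (ω : ℝ → ℝ)
    (hω_cont : ContinuousOn ω (Set.Ici 0))
    (hω_mono : StrictMonoOn ω (Set.Ici 0))
    (hω_diff : ∀ r : ℝ, 0 < r → DifferentiableAt ℝ ω r)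
    (hω0 : ω 0 = 0) :
    ∫⁻ r in Set.Ioo (0:ℝ) 1, ENNReal.ofReal (deriv ω r / ω r) = ⊤ := by
  have hωpos : ∀ r : ℝ, 0 < r → 0 < ω r := fun r hr => by
    have := hω_mono (le_refl (0:ℝ)) hr.le hr
    rwa [hω0] at this
  have hdnn : ∀ r : ℝ, 0 < r → 0 ≤ deriv ω r := fun r hr =>
    deriv_nonneg_of_strictMonoOn ω hω_mono hr (hω_diff r hr)
  set h : ℝ → ℝ := fun r => deriv ω r / ω r with hh
  by_contra hfin
  have hlt : ∫⁻ r in Set.Ioo (0:ℝ) 1, ENNReal.ofReal (h r) < ⊤ := lt_top_iff_ne_top.2 hfin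
  -- measurability
  have hωcont' : ContinuousOn ω (Set.Ioo (0:ℝ) 1) := fun r hr =>
    ((hω_diff r hr.1).continuousAt).continuousWithinAt
  have haem : AEMeasurable h (volume.restrict (Set.Ioo (0:ℝ) 1)) :=
    ((measurable_deriv ω).aemeasurable).div (hωcont'.aemeasurable measurableSet_Ioo)
  have hnn : ∀ᵐ r ∂(volume.restrict (Set.Ioo (0:ℝ) 1)), 0 ≤ h r := by
    filter_upwards [ae_restrict_mem measurableSet_Ioo] with r hr
    exact div_nonneg (hdnn r hr.1) (hωpos r hr.1).le
  have hInt : IntegrableOn h (Set.Ioo (0:ℝ) 1) := by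
    refine ⟨haem.aestronglyMeasurable, ?_⟩
    rw [hasFiniteIntegral_iff_norm]
    have : ∫⁻ a in Set.Ioo (0:ℝ) 1, ENNReal.ofReal ‖h a‖ =
        ∫⁻ a in Set.Ioo (0:ℝ) 1, ENNReal.ofReal (h a) :=
      lintegral_congr_ae (hnn.mono fun a ha => by dsimp only; rw [Real.norm_of_nonneg ha])
    rwa [this]
  set C : ℝ := ∫ r in Set.Ioo (0:ℝ) 1, h r with hC
  set δ : ℝ := Real.exp (Real.log (ω (1/2)) - C) with hδ
  have hδpos : 0 < δ := Real.exp_pos _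
  -- lower bound for ω ε
  have key : ∀ ε : ℝ, ε ∈ Set.Ioo (0:ℝ) (1/2) → δ ≤ ω ε := by
    intro ε hε
    have hε2 : ε ≤ 1/2 := hε.2.le
    have hsub : Set.Icc ε (1/2) ⊆ Set.Ioo (0:ℝ) 1 := fun x hx =>
      ⟨lt_of_lt_of_le hε.1 hx.1, lt_of_le_of_lt hx.2 (by norm_num)⟩
    have huicc : IntegrableOn h (Set.uIcc ε (1/2)) := by
      rw [Set.uIcc_of_le hε2]; exact hInt.mono_set hsub
    have hII : IntervalIntegrable h volume ε (1/2) := huicc.intervalIntegrable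
    have hFTC : ∫ s in ε..(1/2), h s = Real.log (ω (1/2)) - Real.log (ω ε) := by
      refine intervalIntegral.integral_eq_sub_of_hasDerivAt (f := fun t => Real.log (ω t)) (fun s hs => ?_) hII
      rw [Set.uIcc_of_le hε2] at hs
      have hspos : 0 < s := lt_of_lt_of_le hε.1 hs.1
      exact ((hω_diff s hspos).hasDerivAt).log (hωpos s hspos).ne'
    have hbound : ∫ s in ε..(1/2), h s ≤ C := by
      rw [intervalIntegral.integral_of_le hε2]
      refine setIntegral_mono_set hInt hnn ?_
      exact Filter.Eventually.of_forall fun x hx =>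
        ⟨lt_of_lt_of_le hε.1 hx.1.le, lt_of_le_of_lt hx.2 (by norm_num)⟩
    have hlog : Real.log (ω (1/2)) - C ≤ Real.log (ω ε) := by
      have := hFTC ▸ hbound
      linarith
    calc δ ≤ Real.exp (Real.log (ω ε)) := Real.exp_le_exp.2 hlog
      _ = ω ε := Real.exp_log (hωpos ε hε.1)
  -- contradiction with continuity at 0
  have htend : Filter.Tendsto ω (nhdsWithin 0 (Set.Ici 0)) (nhds 0) := by
    have := (hω_cont 0 Set.self_mem_Ici).tendsto
    rwa [hω0] at this
  have hev : ∀ᶠ x in nhdsWithin 0 (Set.Ioo (0:ℝ) (1/2)), ω x < δ := by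
    have h1 : ∀ᶠ x in nhdsWithin 0 (Set.Ici (0:ℝ)), ω x < δ :=
      htend.eventually_lt_const hδpos
    exact h1.filter_mono (nhdsWithin_mono 0 (fun x hx => hx.1.le))
  haveI : Filter.NeBot (nhdsWithin 0 (Set.Ioo (0:ℝ) (1/2))) := by
    refine mem_closure_iff_nhdsWithin_neBot.1 ?_
    rw [closure_Ioo (by norm_num : (0:ℝ) ≠ 1/2)]
    exact ⟨le_refl 0, by norm_num⟩
  obtain ⟨ε, hωε, hε⟩ := (hev.and self_mem_nhdsWithin).exists
  exact absurd (key ε hε) (not_le.2 hωε)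

theorem step1 {d : ℕ} (hd : 1 ≤ d) (ω : ℝ → ℝ) (k : ℝ)
    (hω_cont : ContinuousOn ω (Set.Ici 0))
    (hωd : ∀ r : ℝ, 0 < r → 0 ≤ deriv ω r)
    (hωpos : ∀ r : ℝ, 0 < r → 0 < ω r)
    (hradial : ∫⁻ r in Set.Ioo (0:ℝ) 1, ENNReal.ofReal (deriv ω r / ω r) = ⊤)
    (hkpos : 0 < k) :
    ∫⁻ x, (Set.indicator (Metric.ball (0 : EuclideanSpace ℝ (Fin d)) 1)
        (fun x => ENNReal.ofReal (deriv ω ‖x‖ / (k * ‖x‖ ^ (d - 1)))) x) *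
      (Set.indicator (Metric.ball (0 : EuclideanSpace ℝ (Fin d)) 1 \ {0})
        (fun x => (ENNReal.ofReal (ω ‖x‖))⁻¹) x) ∂volume = ⊤ := by
  haveI : Nontrivial (EuclideanSpace ℝ (Fin d)) := by
    apply Module.nontrivial_of_finrank_pos (R := ℝ)
    rw [finrank_euclideanSpace_fin]; omega
  have hdim : Module.finrank ℝ (EuclideanSpace ℝ (Fin d)) = d := finrank_euclideanSpace_fin
  set F : ℝ → ℝ≥0∞ := fun r => Set.indicator (Set.Ioo (0:ℝ) 1)
    (fun r => ENNReal.ofReal (deriv ω r / (k * r ^ (d - 1))) * (ENNReal.ofReal (ω |r|))⁻¹) r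
    with hF
  have hωabs : Continuous fun r : ℝ => ω |r| :=
    hω_cont.comp_continuous continuous_abs fun r => abs_nonneg r
  have hFmeas : Measurable F := by
    apply Measurable.indicator _ measurableSet_Ioo
    exact (ENNReal.measurable_ofReal.comp ((measurable_deriv ω).div
        (measurable_const.mul (measurable_id.pow_const (d-1))))).mul
      (ENNReal.measurable_ofReal.comp hωabs.measurable).inv
  -- pointwise identity
  have hptwise : ∀ x : EuclideanSpace ℝ (Fin d),
      (Set.indicator (Metric.ball (0 : EuclideanSpace ℝ (Fin d)) 1)
        (fun x => ENNReal.ofReal (deriv ω ‖x‖ / (k * ‖x‖ ^ (d - 1)))) x) *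
      (Set.indicator (Metric.ball (0 : EuclideanSpace ℝ (Fin d)) 1 \ {0})
        (fun x => (ENNReal.ofReal (ω ‖x‖))⁻¹) x) = F ‖x‖ := by
    intro x
    by_cases hx : x ∈ Metric.ball (0 : EuclideanSpace ℝ (Fin d)) 1 \ {0}
    · have hxball : x ∈ Metric.ball (0 : EuclideanSpace ℝ (Fin d)) 1 := hx.1
      have hxnorm : ‖x‖ ∈ Set.Ioo (0:ℝ) 1 :=
        ⟨norm_pos_iff.2 hx.2, by rwa [← mem_ball_zero_iff]⟩
      simp only [hF]
      rw [Set.indicator_of_mem hx, Set.indicator_of_mem hxball,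
        Set.indicator_of_mem hxnorm, abs_of_nonneg (norm_nonneg x)]
    · simp only [hF]
      rw [Set.indicator_of_notMem hx, mul_zero]
      by_cases hxball : x ∈ Metric.ball (0 : EuclideanSpace ℝ (Fin d)) 1
      · have hx0 : x = 0 := by
          by_contra h0
          exact hx ⟨hxball, h0⟩
        rw [Set.indicator_of_notMem]
        rw [hx0, norm_zero]
        exact fun h => lt_irrefl _ h.1
      · rw [Set.indicator_of_notMem]
        intro h
        exact hxball (mem_ball_zero_iff.2 h.2)
  calc ∫⁻ x, _ ∂volume = ∫⁻ x : EuclideanSpace ℝ (Fin d), F ‖x‖ ∂volume :=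
        lintegral_congr hptwise
    _ = (Module.finrank ℝ (EuclideanSpace ℝ (Fin d))) *
          volume (ball (0 : EuclideanSpace ℝ (Fin d)) 1) *
          ∫⁻ r in Ioi (0:ℝ), ENNReal.ofReal
            (r ^ (Module.finrank ℝ (EuclideanSpace ℝ (Fin d)) - 1)) * F r :=
        my_lintegral_fun_norm_addHaar volume F hFmeas
    _ = ⊤ := by
        rw [hdim]
        have hinner : ∫⁻ r in Ioi (0:ℝ), ENNReal.ofReal (r ^ (d - 1)) * F r = ⊤ := by
          have heq : ∀ r : ℝ, ENNReal.ofReal (r ^ (d-1)) * F r =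
              Set.indicator (Set.Ioo (0:ℝ) 1)
                (fun r => ENNReal.ofReal (deriv ω r / ω r) * ENNReal.ofReal k⁻¹) r := by
            intro r
            by_cases hr : r ∈ Set.Ioo (0:ℝ) 1
            · simp only [hF]
              rw [Set.indicator_of_mem hr, Set.indicator_of_mem hr]
              have hrpos := hr.1
              have hωr := hωpos r hrpos
              have hd0 := hωd r hrpos
              rw [abs_of_nonneg hrpos.le, ← mul_assoc,
                ← ENNReal.ofReal_mul (pow_nonneg hrpos.le _),
                ← div_eq_mul_inv, ← ENNReal.ofReal_div_of_pos hωr,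
                ← ENNReal.ofReal_mul (div_nonneg hd0 hωr.le)]
              congr 1
              have hk0 : k ≠ 0 := hkpos.ne'
              have hr0 : r ^ (d-1) ≠ 0 := (pow_pos hrpos _).ne'
              field_simp
            · simp only [hF]
              rw [Set.indicator_of_notMem hr, Set.indicator_of_notMem hr, mul_zero]
          rw [lintegral_congr heq, lintegral_indicator measurableSet_Ioo,
            Measure.restrict_restrict measurableSet_Ioo,
            Set.inter_eq_self_of_subset_left Set.Ioo_subset_Ioi_self,
            lintegral_mul_const' _ _ ENNReal.ofReal_ne_top,
            hradial, ENNReal.top_mul]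
          simpa [ENNReal.ofReal_eq_zero, not_le] using inv_pos.2 hkpos
        rw [hinner, ENNReal.mul_top]
        refine mul_ne_zero ?_ ?_
        · simpa using by omega
        · exact (measure_ball_pos volume 0 one_pos).ne'


theorem sharpness_concentration_one_over_N
    {d N : ℕ} (hd : 1 ≤ d) (hN : 2 ≤ N)
    (ω : ℝ → ℝ)
    (hω_cont : ContinuousOn ω (Set.Ici 0))
    (hω_mono : StrictMonoOn ω (Set.Ici 0))
    (hω_diff : ∀ r : ℝ, 0 < r → DifferentiableAt ℝ ω r)
    (hω0 : ω 0 = 0)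
    (k : ℝ)
    (hk : k = (volume (Metric.ball (0 : EuclideanSpace ℝ (Fin d)) 1)).toReal * ω 1)
    (ρ : Measure (EuclideanSpace ℝ (Fin d)))
    (hρ : ρ = ((N : ℝ≥0∞))⁻¹ • Measure.dirac (0 : EuclideanSpace ℝ (Fin d)) +
      (((N : ℝ≥0∞) - 1) / N) • volume.withDensity (fun x =>
        Set.indicator (Metric.ball (0 : EuclideanSpace ℝ (Fin d)) 1)
          (fun x => ENNReal.ofReal (deriv ω ‖x‖ / (k * ‖x‖ ^ (d - 1)))) x)) :
    ∀ P : Measure (Fin N → EuclideanSpace ℝ (Fin d)),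
      IsProbabilityMeasure P →
      (∀ i : Fin N, Measure.map (fun X => X i) P = ρ) →
      ∫⁻ X, (∑ p ∈ Finset.univ.filter (fun p : Fin N × Fin N => p.1 < p.2),
        (ENNReal.ofReal (ω (dist (X p.1) (X p.2))))⁻¹) ∂P = ⊤ := by
  intro P hP hmarg
  have hω1 : 0 < ω 1 := by
    have := hω_mono Set.self_mem_Ici (Set.mem_Ici.2 zero_le_one) one_pos
    rwa [hω0] at this
  have hωpos : ∀ r : ℝ, 0 < r → 0 < ω r := fun r hr => by
    have := hω_mono Set.self_mem_Ici (Set.mem_Ici.2 hr.le) hr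
    rwa [hω0] at this
  have hωd : ∀ r : ℝ, 0 < r → 0 ≤ deriv ω r := fun r hr =>
    deriv_nonneg_of_strictMonoOn ω hω_mono hr (hω_diff r hr)
  haveI hnt : Nontrivial (EuclideanSpace ℝ (Fin d)) := by
    apply Module.nontrivial_of_finrank_pos (R := ℝ)
    rw [finrank_euclideanSpace_fin]; omega
  have hkpos : 0 < k := by
    rw [hk]
    exact mul_pos (ENNReal.toReal_pos (measure_ball_pos volume 0 one_pos).ne'
      measure_ball_lt_top.ne) hω1
  -- the function g
  set g : EuclideanSpace ℝ (Fin d) → ℝ≥0∞ := fun x =>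
    Set.indicator (Metric.ball (0 : EuclideanSpace ℝ (Fin d)) 1 \ {0})
      (fun x => (ENNReal.ofReal (ω ‖x‖))⁻¹) x with hgdef
  have hωnorm : Continuous fun x : EuclideanSpace ℝ (Fin d) => ω ‖x‖ :=
    hω_cont.comp_continuous continuous_norm fun x => norm_nonneg x
  have hgmeas : Measurable g :=
    Measurable.indicator (ENNReal.measurable_ofReal.comp hωnorm.measurable).inv
      (measurableSet_ball.diff (measurableSet_singleton 0))
  have hg0 : g 0 = 0 := by
    apply Set.indicator_of_notMem; simp
  have hfmeas : Measurable (fun x : EuclideanSpace ℝ (Fin d) =>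
      Set.indicator (Metric.ball (0 : EuclideanSpace ℝ (Fin d)) 1)
        (fun x => ENNReal.ofReal (deriv ω ‖x‖ / (k * ‖x‖ ^ (d - 1)))) x) := by
    apply Measurable.indicator _ measurableSet_ball
    exact ENNReal.measurable_ofReal.comp
      (((measurable_deriv ω).comp continuous_norm.measurable).div
        (measurable_const.mul (continuous_norm.measurable.pow_const (d-1))))
  have hcoef : ((N : ℝ≥0∞) - 1) / N ≠ 0 := by
    have h1 : (1 : ℝ≥0∞) < N := by exact_mod_cast (by omega : 1 < N)
    have h2 : ((N : ℝ≥0∞) - 1) ≠ 0 := (tsub_pos_of_lt h1).ne'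
    simp [ENNReal.div_eq_zero_iff, h2, ENNReal.natCast_ne_top]
  have hgρ : ∫⁻ x, g x ∂ρ = ⊤ := by
    rw [hρ, lintegral_add_measure, lintegral_smul_measure, lintegral_smul_measure,
      lintegral_dirac' _ hgmeas, hg0, smul_zero, zero_add, smul_eq_mul,
      lintegral_withDensity_eq_lintegral_mul _ hfmeas hgmeas]
    have hIG := step1 hd ω k hω_cont hωd hωpos
      (radial_lintegral_top ω hω_cont hω_mono hω_diff hω0) hkpos
    have : ∫⁻ a, ((fun x : EuclideanSpace ℝ (Fin d) =>
        Set.indicator (Metric.ball (0 : EuclideanSpace ℝ (Fin d)) 1)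
          (fun x => ENNReal.ofReal (deriv ω ‖x‖ / (k * ‖x‖ ^ (d - 1)))) x) * g) a ∂volume = ⊤ := by
      simpa [Pi.mul_apply, hgdef] using hIG
    rw [this, ENNReal.mul_top hcoef]
  haveI : NullSingletonClass (volume : Measure (EuclideanSpace ℝ (Fin d))) := inferInstance
  have hρ0 : ρ {0} = (N : ℝ≥0∞)⁻¹ := by
    rw [hρ, Measure.add_apply, Measure.smul_apply, Measure.smul_apply,
      Measure.dirac_apply_of_mem (Set.mem_singleton (0 : EuclideanSpace ℝ (Fin d))),
      withDensity_apply _ (measurableSet_singleton 0),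
      Measure.restrict_singleton, measure_singleton]
    simp
  have hmeasD : ∀ i : Fin N,
      MeasurableSet ((fun X : Fin N → EuclideanSpace ℝ (Fin d) => X i) ⁻¹' {0}) :=
    fun i => (measurable_pi_apply i) (measurableSet_singleton 0)
  have hPD : ∀ i : Fin N,
      P ((fun X : Fin N → EuclideanSpace ℝ (Fin d) => X i) ⁻¹' {0}) = (N : ℝ≥0∞)⁻¹ := by
    intro i
    have h := Measure.map_apply (μ := P) (measurable_pi_apply i)
      (measurableSet_singleton (0 : EuclideanSpace ℝ (Fin d)))
    rw [hmarg i, hρ0] at h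
    exact h.symm
  by_cases hcase : ∀ i j : Fin N, i ≠ j →
      P (((fun X : Fin N → EuclideanSpace ℝ (Fin d) => X i) ⁻¹' {0}) ∩
        ((fun X => X j) ⁻¹' {0})) = 0
  · -- all pairwise intersections null
    have hU : P (⋃ i, (fun X : Fin N → EuclideanSpace ℝ (Fin d) => X i) ⁻¹' {0}) = 1 := by
      rw [measure_iUnion₀ (fun i j hij => hcase i j hij)
        (fun i => (hmeasD i).nullMeasurableSet), tsum_fintype]
      simp only [hPD]
      rw [Finset.sum_const, Finset.card_univ, Fintype.card_fin, nsmul_eq_mul,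
        ENNReal.mul_inv_cancel (by exact_mod_cast (by omega : N ≠ 0))
          (ENNReal.natCast_ne_top N)]
    have haeU : ∀ᵐ X ∂P, ∃ i, X i = 0 := by
      rw [ae_iff]
      have hset : {X : Fin N → EuclideanSpace ℝ (Fin d) | ¬ ∃ i, X i = 0} =
          (⋃ i, (fun X : Fin N → EuclideanSpace ℝ (Fin d) => X i) ⁻¹' {0})ᶜ := by
        ext X; simp [Set.mem_iUnion]
      rw [hset, measure_compl (MeasurableSet.iUnion hmeasD) (measure_ne_top P _), hU,
        measure_univ, tsub_self]
    set j₀ : Fin N := ⟨0, by omega⟩ with hj₀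
    have hae2 : ∀ᵐ X ∂P, g (X j₀) ≤
        ∑ p ∈ Finset.univ.filter (fun p : Fin N × Fin N => p.1 < p.2),
          (ENNReal.ofReal (ω (dist (X p.1) (X p.2))))⁻¹ := by
      filter_upwards [haeU] with X hX
      by_cases hXj : X j₀ = 0
      · rw [hXj, hg0]; exact zero_le
      · obtain ⟨i₀, hi₀⟩ := hX
        have hne : i₀ ≠ j₀ := fun h => hXj (by rw [← h]; exact hi₀)
        have hgle : g (X j₀) ≤ (ENNReal.ofReal (ω ‖X j₀‖))⁻¹ :=
          Set.indicator_le_self _ _ (X j₀)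
        rcases hne.lt_or_gt with hlt | hlt
        · have hmem : (i₀, j₀) ∈ Finset.univ.filter
              (fun p : Fin N × Fin N => p.1 < p.2) :=
            Finset.mem_filter.2 ⟨Finset.mem_univ _, hlt⟩
          calc g (X j₀) ≤ (ENNReal.ofReal (ω ‖X j₀‖))⁻¹ := hgle
            _ = (ENNReal.ofReal (ω (dist (X (i₀, j₀).1) (X (i₀, j₀).2))))⁻¹ := by
                simp only; rw [hi₀, dist_zero_left]
            _ ≤ _ := Finset.single_le_sum
                (f := fun p : Fin N × Fin N =>
                  (ENNReal.ofReal (ω (dist (X p.1) (X p.2))))⁻¹)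
                (fun p _ => zero_le) hmem
        · have hmem : (j₀, i₀) ∈ Finset.univ.filter
              (fun p : Fin N × Fin N => p.1 < p.2) :=
            Finset.mem_filter.2 ⟨Finset.mem_univ _, hlt⟩
          calc g (X j₀) ≤ (ENNReal.ofReal (ω ‖X j₀‖))⁻¹ := hgle
            _ = (ENNReal.ofReal (ω (dist (X (j₀, i₀).1) (X (j₀, i₀).2))))⁻¹ := by
                simp only; rw [hi₀, dist_zero_right]
            _ ≤ _ := Finset.single_le_sum
                (f := fun p : Fin N × Fin N =>
                  (ENNReal.ofReal (ω (dist (X p.1) (X p.2))))⁻¹)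
                (fun p _ => zero_le) hmem
    have hgint : ∫⁻ X, g (X j₀) ∂P = ⊤ := by
      rw [← lintegral_map hgmeas (measurable_pi_apply j₀), hmarg j₀]
      exact hgρ
    exact top_unique (hgint ▸ lintegral_mono_ae hae2)
  · -- some intersection has positive measure
    push_neg at hcase
    obtain ⟨i, j, hij, hPS⟩ := hcase
    have key : ∀ a b : Fin N, a < b →
        P (((fun X : Fin N → EuclideanSpace ℝ (Fin d) => X a) ⁻¹' {0}) ∩
          ((fun X => X b) ⁻¹' {0})) ≠ 0 →
        ∫⁻ X, (∑ p ∈ Finset.univ.filter (fun p : Fin N × Fin N => p.1 < p.2),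
          (ENNReal.ofReal (ω (dist (X p.1) (X p.2))))⁻¹) ∂P = ⊤ := by
      intro a b hab hS
      have hSmeas : MeasurableSet (((fun X : Fin N → EuclideanSpace ℝ (Fin d) => X a) ⁻¹' {0}) ∩
          ((fun X => X b) ⁻¹' {0})) := (hmeasD a).inter (hmeasD b)
      refine top_unique ?_
      calc (⊤:ℝ≥0∞) = ⊤ * P (((fun X : Fin N → EuclideanSpace ℝ (Fin d) => X a) ⁻¹' {0}) ∩
            ((fun X => X b) ⁻¹' {0})) := (ENNReal.top_mul hS).symm
        _ = ∫⁻ _X in (((fun X : Fin N → EuclideanSpace ℝ (Fin d) => X a) ⁻¹' {0}) ∩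
            ((fun X => X b) ⁻¹' {0})), ⊤ ∂P := (setLIntegral_const _ ⊤).symm
        _ ≤ ∫⁻ X in (((fun X : Fin N → EuclideanSpace ℝ (Fin d) => X a) ⁻¹' {0}) ∩
            ((fun X => X b) ⁻¹' {0})),
            (∑ p ∈ Finset.univ.filter (fun p : Fin N × Fin N => p.1 < p.2),
              (ENNReal.ofReal (ω (dist (X p.1) (X p.2))))⁻¹) ∂P := by
              refine lintegral_mono_ae ?_
              filter_upwards [ae_restrict_mem hSmeas] with X hX
              have hXa : X a = 0 := hX.1
              have hXb : X b = 0 := hX.2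
              have hmem : (a, b) ∈ Finset.univ.filter
                  (fun p : Fin N × Fin N => p.1 < p.2) :=
                Finset.mem_filter.2 ⟨Finset.mem_univ _, hab⟩
              have hval : (ENNReal.ofReal (ω (dist (X (a, b).1) (X (a, b).2))))⁻¹ = ⊤ := by
                simp only
                rw [hXa, hXb, dist_self, hω0, ENNReal.ofReal_zero, ENNReal.inv_zero]
              calc (⊤:ℝ≥0∞) = _ := hval.symm
                _ ≤ _ := Finset.single_le_sum
                    (f := fun p : Fin N × Fin N =>
                      (ENNReal.ofReal (ω (dist (X p.1) (X p.2))))⁻¹)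
                    (fun p _ => zero_le) hmem
        _ ≤ _ := setLIntegral_le_lintegral _ _
    rcases hij.lt_or_gt with hlt | hlt
    · exact key i j hlt hPS
    · refine key j i hlt ?_
      rwa [Set.inter_comm]
end
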